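/- arXiv:1706.00953 — 3 statements merged into one kernel-verified Lean document; each statement's English description precedes it below -/
import Mathlib

section
/- For every n ≥ 1 and every admissible sequence (j_1,…,j_n), the Lebesgue measure of the ROE cylinder satisfies λ(Δ_{j_1…j_n}) = (∏_{i=1}^{n−1} a_i(j_i)/b_i(j_i)) · 1/(j_n·(j_n − 1)). In particular λ(Δ_{j_1}) = 1/(j_1·(j_1 − 1)). -/
open MeasureTheory Set

namespace ROE

/-- The `x`-sequence of the restricted Oppenheim algorithm applied to `x`:
index `k` corresponds to the paper's `x_{k+1}`, and `a k`, `b k` correspond to the paper's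
`a_{k+1}`, `b_{k+1}`.  So `X a b x 0 = x₁ = x` and
`x_{k+2} = (b_{k+1}(d_{k+1})/a_{k+1}(d_{k+1})) · (x_{k+1} - 1/d_{k+1})`. -/
noncomputable def X (a b : ℕ → ℕ → ℕ) (x : ℝ) : ℕ → ℝ
  | 0 => x
  | k + 1 =>
      let xk := X a b x k
      let d : ℕ := (⌊1 / xk⌋).toNat + 1
      ((b k d : ℝ) / (a k d : ℝ)) * (xk - 1 / (d : ℝ))

/-- The digit `d_{k+1}(x) = ⌊1/x_{k+1}⌋ + 1` of the restricted Oppenheim expansion. -/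
noncomputable def D (a b : ℕ → ℕ → ℕ) (x : ℝ) (k : ℕ) : ℕ :=
  (⌊1 / X a b x k⌋).toNat + 1

/-- The restricted Oppenheim expansion of `x` is infinite: all `x_n` lie in `(0,1)`. -/
def InfiniteROE (a b : ℕ → ℕ → ℕ) (x : ℝ) : Prop :=
  ∀ k, X a b x k ∈ Set.Ioo (0 : ℝ) 1

/-- The finite sequence `(j 0, …, j (n-1))` (the paper's `(j_1, …, j_n)`) is admissible:
`j_1 ≥ 2` and `j_{i+1} > h_i(j_i)`.  Here `h i` corresponds to the paper's `h_{i+1}`. -/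
def Admissible (h : ℕ → ℕ → ℕ) (n : ℕ) (j : ℕ → ℕ) : Prop :=
  2 ≤ j 0 ∧ ∀ i, i + 1 < n → h i (j i) < j (i + 1)

/-- The cylinder of rank `n` with base `(j 0, …, j (n-1))`: the set of `x ∈ (0,1)` with
infinite ROE whose first `n` digits are `j 0, …, j (n-1)`. -/
def cylinder (a b : ℕ → ℕ → ℕ) (n : ℕ) (j : ℕ → ℕ) : Set ℝ :=
  {x | x ∈ Set.Ioo (0 : ℝ) 1 ∧ InfiniteROE a b x ∧ ∀ i < n, D a b x i = j i}

/-- The difference-ROE digit `α_{k+1}(x)`: `α₁ = d₁ - 1`, `α_{k+2} = d_{k+2} - h_{k+1}(d_{k+1})`. -/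
noncomputable def alpha (a b h : ℕ → ℕ → ℕ) (x : ℝ) : ℕ → ℕ
  | 0 => D a b x 0 - 1
  | k + 1 => D a b x (k + 1) - h k (D a b x k)

/-- The digit sequence `d` reconstructed from a sequence `α` of difference-ROE symbols:
`d₁ = α₁ + 1`, `d_{k+2} = h_{k+1}(d_{k+1}) + α_{k+2}`. -/
def dSeq (h : ℕ → ℕ → ℕ) (α : ℕ → ℕ) : ℕ → ℕ
  | 0 => α 0 + 1
  | k + 1 => h k (dSeq h α k) + α (k + 1)

/-- The real number whose difference-ROE digits are `(α k)`:
`Φ(α) = Σ_{n≥1} (∏_{i=1}^{n-1} a_i(d_i)/b_i(d_i)) · (1/d_n)`. -/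
noncomputable def Phi (a b h : ℕ → ℕ → ℕ) (α : ℕ → ℕ) : ℝ :=
  ∑' n : ℕ, (∏ i ∈ Finset.range n, (a i (dSeq h α i) : ℝ) / (b i (dSeq h α i) : ℝ)) *
    (1 / (dSeq h α n : ℝ))

lemma X_succ (a b : ℕ → ℕ → ℕ) (x : ℝ) (k : ℕ) :
    X a b x (k+1) = ((b k (D a b x k) : ℝ) / (a k (D a b x k) : ℝ)) *
      (X a b x k - 1 / (D a b x k : ℝ)) := rfl

section Aux

/-- The affine map that `x ↦ x_{k+1}` restricts to on the cylinder with digits `j`. -/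
noncomputable def Fmap (a b : ℕ → ℕ → ℕ) (j : ℕ → ℕ) : ℕ → ℝ → ℝ
  | 0 => fun x => x
  | k + 1 => fun x =>
      ((b k (j k) : ℝ) / (a k (j k) : ℝ)) * (Fmap a b j k x - 1 / (j k : ℝ))

variable (a b h : ℕ → ℕ → ℕ) (j : ℕ → ℕ)

lemma Fmap_affine (k : ℕ) (x : ℝ) :
    Fmap a b j k x =
      (∏ i ∈ Finset.range k, (b i (j i) : ℝ) / (a i (j i) : ℝ)) * x + Fmap a b j k 0 := by
  induction k with
  | zero => simp [Fmap]
  | succ k ih =>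
      show ((b k (j k) : ℝ) / (a k (j k) : ℝ)) * (Fmap a b j k x - 1 / (j k : ℝ)) = _
      rw [ih]
      show _ = _ * x + ((b k (j k) : ℝ) / (a k (j k) : ℝ)) * (Fmap a b j k 0 - 1 / (j k : ℝ))
      rw [Finset.prod_range_succ]
      ring


/-- Reverse step: if the image lies in `(0, 1/H]` then the point lies in `(1/jk, 1/(jk-1)]`. -/
lemma step_rev {t A B H jk : ℝ} (hA : 0 < A) (hB : 0 < B) (hH : 0 < H)
    (hBH : B * H = A * jk * (jk - 1)) (hjk : (2:ℝ) ≤ jk)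
    (hs : (B/A) * (t - 1/jk) ∈ Ioc (0:ℝ) (1/H)) :
    t ∈ Ioc (1/jk) (1/(jk-1)) := by
  have hj1 : (0:ℝ) < jk - 1 := by linarith
  have hj0 : (0:ℝ) < jk := by linarith
  have hBA : 0 < B / A := div_pos hB hA
  have hu : 0 < t - 1/jk := by
    by_contra hc
    push_neg at hc
    nlinarith [hs.1]
  constructor
  · linarith
  · have h1 : B * (t - 1/jk) * H ≤ A := by
      have := hs.2
      rw [div_mul_eq_mul_div, div_le_div_iff₀ hA hH] at this
      linarith
    have h2 : (t - 1/jk) * (jk * (jk - 1)) ≤ 1 := by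
      have hBH0 : 0 < B * H := mul_pos hB hH
      have : A * ((t - 1/jk) * (jk * (jk - 1))) ≤ A * 1 := by nlinarith
      exact le_of_mul_le_mul_left this hA
    have h3 : t - 1/jk ≤ 1/(jk * (jk - 1)) := by
      rw [le_div_iff₀ (by positivity : (0:ℝ) < jk * (jk-1))]
      exact h2
    have heq : 1/jk + 1/(jk*(jk-1)) = 1/(jk-1) := by field_simp; ring
    linarith

/-- If the digit of `t` is `j` and `t ∈ (0,1)`, then `2 ≤ j` and `t ∈ (1/j, 1/(j-1)]`. -/
lemma mem_Ioc_of_digit {t : ℝ} {j : ℕ} (ht : t ∈ Ioo (0:ℝ) 1)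
    (hd : (⌊1/t⌋).toNat + 1 = j) : 2 ≤ j ∧ t ∈ Ioc (1/(j:ℝ)) (1/((j:ℝ)-1)) := by
  obtain ⟨ht0, ht1⟩ := ht
  have h1t : 1 < 1/t := by rw [lt_div_iff₀ ht0]; linarith
  have hfl : 1 ≤ ⌊1/t⌋ := by exact_mod_cast Int.le_floor.mpr (by exact_mod_cast h1t.le)
  have htn : ((⌊1/t⌋).toNat : ℤ) = ⌊1/t⌋ := Int.toNat_of_nonneg (by omega)
  have hj2 : 2 ≤ j := by omega
  have hjfl : (⌊1/t⌋ : ℤ) = (j : ℤ) - 1 := by omega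
  refine ⟨hj2, ?_, ?_⟩
  · have hlt : 1/t < (j:ℝ) := by
      have := Int.lt_floor_add_one (1/t); rw [hjfl] at this; push_cast at this; linarith
    have hj0 : (0:ℝ) < (j:ℝ) := by positivity
    rw [div_lt_iff₀ hj0]
    have := (div_lt_iff₀ ht0).mp hlt
    linarith [mul_comm t (j:ℝ)]
  · have hle : ((j:ℝ) - 1) ≤ 1/t := by
      have := Int.floor_le (1/t); rw [hjfl] at this; push_cast at this; linarith
    have hj1 : (0:ℝ) < (j:ℝ) - 1 := by
      have : (2:ℝ) ≤ j := by exact_mod_cast hj2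
      linarith
    rw [le_div_iff₀ hj1]
    have := (le_div_iff₀ ht0).mp hle
    linarith [mul_comm t ((j:ℝ) - 1)]

lemma digit_of_mem {t : ℝ} {j : ℕ} (hj : 2 ≤ j)
    (ht : t ∈ Ioc (1/(j:ℝ)) (1/((j:ℝ)-1))) : (⌊1/t⌋).toNat + 1 = j := by
  have hj1 : (0:ℝ) < (j:ℝ) - 1 := by
    have : (2:ℝ) ≤ j := by exact_mod_cast hj
    linarith
  have hj0 : (0:ℝ) < j := by linarith
  have ht0 : 0 < t := lt_trans (by positivity) ht.1
  have h1 : ((j:ℝ) - 1) ≤ 1/t := by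
    rw [le_div_iff₀ ht0]
    have := (le_div_iff₀ hj1).mp ht.2
    linarith [mul_comm t ((j:ℝ)-1)]
  have h2 : 1/t < (j:ℝ) := by
    rw [div_lt_iff₀ ht0]
    have := (div_lt_iff₀ hj0).mp ht.1
    linarith [mul_comm t (j:ℝ)]
  have hfl : ⌊1/t⌋ = (j:ℤ) - 1 :=
    Int.floor_eq_iff.mpr ⟨by push_cast; linarith, by push_cast; linarith⟩
  omega


/-- One step of the algorithm stays in `(0, 1/h]`. -/
lemma step_mem {t : ℝ} {A B H jk : ℕ} (hA : 0 < A) (hB : 0 < B) (hH : 0 < H)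
    (hABH : B * H = A * jk * (jk - 1)) (hj : 2 ≤ jk)
    (ht : t ∈ Ioc (1/(jk:ℝ)) (1/((jk:ℝ)-1))) :
    ((B:ℝ)/(A:ℝ)) * (t - 1/(jk:ℝ)) ∈ Ioc (0:ℝ) (1/(H:ℝ)) := by
  have hj1 : (0:ℝ) < (jk:ℝ) - 1 := by
    have : (2:ℝ) ≤ jk := by exact_mod_cast hj
    linarith
  have hj0 : (0:ℝ) < jk := by linarith
  have hA0 : (0:ℝ) < A := by exact_mod_cast hA
  have hB0 : (0:ℝ) < B := by exact_mod_cast hB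
  have hH0 : (0:ℝ) < H := by exact_mod_cast hH
  have hcast : (B:ℝ) * H = A * jk * ((jk:ℝ) - 1) := by
    have h1 : (jk:ℝ) - 1 = ((jk - 1 : ℕ) : ℝ) := by
      have : 1 ≤ jk := by omega
      push_cast [this]; ring
    rw [h1]; exact_mod_cast hABH
  constructor
  · have : 0 < t - 1/(jk:ℝ) := by linarith [ht.1]
    positivity
  · have h2 : t - 1/(jk:ℝ) ≤ 1/((jk:ℝ)*((jk:ℝ)-1)) := by
      have heq : 1/((jk:ℝ)-1) - 1/(jk:ℝ) = 1/((jk:ℝ)*((jk:ℝ)-1)) := by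
        field_simp; ring
      linarith [ht.2]
    rw [div_mul_eq_mul_div, div_le_div_iff₀ hA0 hH0, one_mul]
    calc (B:ℝ) * (t - 1/(jk:ℝ)) * H ≤ (B:ℝ) * (1/((jk:ℝ)*((jk:ℝ)-1))) * H := by
          have := mul_le_mul_of_nonneg_left h2 hB0.le
          nlinarith
      _ = (B:ℝ) * H / ((jk:ℝ)*((jk:ℝ)-1)) := by ring
      _ = A := by rw [hcast]; field_simp


section Chain

variable {a b h : ℕ → ℕ → ℕ} {j : ℕ → ℕ} {n : ℕ}
variable (ha : ∀ k j, 2 ≤ j → 0 < a k j) (hb : ∀ k j, 2 ≤ j → 0 < b k j)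
variable (hpos : ∀ k j, 2 ≤ j → 0 < h k j)
variable (hab : ∀ k j, 2 ≤ j → b k j * h k j = a k j * j * (j - 1))

/-- Membership of `Fmap k x` in the `k`-th digit interval. -/
def Good (a b : ℕ → ℕ → ℕ) (j : ℕ → ℕ) (k : ℕ) (x : ℝ) : Prop :=
  Fmap a b j k x ∈ Ioc (1/(j k : ℝ)) (1/((j k : ℝ) - 1))

lemma j_ge_two (hadm : Admissible h n j) (hpos : ∀ k j, 2 ≤ j → 0 < h k j) :
    ∀ k, k < n → 2 ≤ j k := by
  intro k
  induction k with
  | zero => intro _; exact hadm.1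
  | succ k ih =>
      intro hk
      have h1 : 2 ≤ j k := ih (by omega)
      have h2 : 0 < h k (j k) := hpos k (j k) h1
      have := hadm.2 k (by omega)
      omega

lemma cast_two_le {m : ℕ} (hm : 2 ≤ m) : (2:ℝ) ≤ (m:ℝ) := by exact_mod_cast hm

lemma cast_hab {A B H m : ℕ} (hm : 2 ≤ m) (hABH : B * H = A * m * (m - 1)) :
    (B:ℝ) * H = A * m * ((m:ℝ) - 1) := by
  have h1 : ((m:ℝ) - 1) = ((m - 1 : ℕ) : ℝ) := by
    have : 1 ≤ m := by omega
    push_cast [this]; ring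
  rw [h1]; exact_mod_cast hABH

include ha hb hpos hab in
lemma back_step (hadm : Admissible h n j) (k : ℕ) (hk : k + 1 < n) (x : ℝ)
    (hx : Good a b j (k+1) x) : Good a b j k x := by
  have hjk : 2 ≤ j k := j_ge_two hadm hpos k (by omega)
  have hjk1 : 2 ≤ j (k+1) := j_ge_two hadm hpos (k+1) hk
  have hA := ha k (j k) hjk
  have hB := hb k (j k) hjk
  have hH := hpos k (j k) hjk
  have hA0 : (0:ℝ) < a k (j k) := by exact_mod_cast hA
  have hB0 : (0:ℝ) < b k (j k) := by exact_mod_cast hB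
  have hH0 : (0:ℝ) < h k (j k) := by exact_mod_cast hH
  refine step_rev hA0 hB0 hH0 (cast_hab hjk (hab k (j k) hjk)) (cast_two_le hjk) ?_
  have hx' : Fmap a b j (k+1) x ∈ Ioc (1/(j (k+1) : ℝ)) (1/((j (k+1) : ℝ) - 1)) := hx
  have hstep : Fmap a b j (k+1) x =
      ((b k (j k) : ℝ) / (a k (j k) : ℝ)) * (Fmap a b j k x - 1/(j k : ℝ)) := rfl
  rw [hstep] at hx'
  refine ⟨lt_trans (by positivity) hx'.1, le_trans hx'.2 ?_⟩
  apply one_div_le_one_div_of_le hH0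
  have : h k (j k) < j (k+1) := hadm.2 k hk
  have : (h k (j k) : ℝ) + 1 ≤ (j (k+1) : ℝ) := by exact_mod_cast this
  linarith

include ha hb hpos hab in
lemma back_chain (hadm : Admissible h n j) (k : ℕ) (hk : k < n) (x : ℝ)
    (hx : Good a b j k x) : ∀ i, i ≤ k → Good a b j i x := by
  induction k with
  | zero =>
      intro i hi
      have : i = 0 := by omega
      subst this; exact hx
  | succ k ih =>
      intro i hi
      have hgk : Good a b j k x := back_step ha hb hpos hab hadm k hk x hx
      rcases Nat.lt_or_ge i (k+1) with hik | hik
      · exact ih (by omega) hgk i (by omega)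
      · have : i = k + 1 := by omega
        subst this; exact hx


include hpos in
lemma D_of_good (hadm : Admissible h n j) {x : ℝ} {k : ℕ} (hk : k < n)
    (hXk : X a b x k = Fmap a b j k x) (hg : Good a b j k x) : D a b x k = j k := by
  have hjk : 2 ≤ j k := j_ge_two hadm hpos k hk
  have := digit_of_mem hjk hg
  unfold D
  rw [hXk]
  exact this

include hpos in
lemma X_eq_of_good (hadm : Admissible h n j) (x : ℝ)
    (hG : ∀ i, i < n → Good a b j i x) :
    ∀ k, k ≤ n → X a b x k = Fmap a b j k x := by
  intro k
  induction k with
  | zero => intro _; rfl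
  | succ k ih =>
      intro hk
      have hXk := ih (by omega)
      have hD : D a b x k = j k :=
        D_of_good hpos hadm (by omega) hXk (hG k (by omega))
      rw [X_succ, hD, hXk]
      rfl

include ha hb hpos hab in
lemma good_of_mem_cylinder (hadm : Admissible h n j) {x : ℝ}
    (hx : x ∈ cylinder a b n j) :
    ∀ k, k < n → X a b x k = Fmap a b j k x ∧ Good a b j k x := by
  obtain ⟨hx01, hinf, hdig⟩ := hx
  intro k
  induction k with
  | zero =>
      intro hk
      refine ⟨rfl, ?_⟩
      have := (mem_Ioc_of_digit (hinf 0) (hdig 0 hk)).2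
      exact this
  | succ k ih =>
      intro hk
      obtain ⟨hXk, _⟩ := ih (by omega)
      have hD : D a b x k = j k := hdig k (by omega)
      constructor
      · rw [X_succ, hD, hXk]; rfl
      · have := (mem_Ioc_of_digit (hinf (k+1)) (hdig (k+1) hk)).2
        have hX1 : X a b x (k+1) = Fmap a b j (k+1) x := by
          rw [X_succ, hD, hXk]; rfl
        rw [hX1] at this
        exact this

include ha hb hpos hab in
lemma cylinder_eq (hadm : Admissible h n j) (hn : 1 ≤ n) :
    cylinder a b n j =
      {x | Good a b j (n-1) x} ∩ {x | InfiniteROE a b x} := by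
  ext x
  constructor
  · intro hx
    refine ⟨(good_of_mem_cylinder ha hb hpos hab hadm hx (n-1) (by omega)).2, hx.2.1⟩
  · rintro ⟨hg, hinf⟩
    have hGall : ∀ i, i < n → Good a b j i x :=
      fun i hi => back_chain ha hb hpos hab hadm (n-1) (by omega) x hg i (by omega)
    have hXeq := X_eq_of_good hpos hadm x hGall
    refine ⟨?_, hinf, ?_⟩
    · exact hinf 0
    · intro i hi
      exact D_of_good hpos hadm hi (hXeq i (by omega)) (hGall i hi)

end Chain

end Aux


section Count

/-- The set of reals whose first `m` iterates stay in `(0,1)` with digits `d`, and whose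
`m`-th iterate is exactly `1`. -/
def S (a b : ℕ → ℕ → ℕ) (m : ℕ) (d : Fin m → ℕ) : Set ℝ :=
  {x | (∀ i : Fin m, X a b x i ∈ Ioo (0:ℝ) 1 ∧ D a b x i = d i) ∧ X a b x m = 1}

lemma S_subsingleton {a b : ℕ → ℕ → ℕ}
    (ha : ∀ k j, 2 ≤ j → 0 < a k j) (hb : ∀ k j, 2 ≤ j → 0 < b k j)
    (m : ℕ) (d : Fin m → ℕ) : (S a b m d).Subsingleton := by
  intro x hx y hy
  have key : ∀ k, X a b x (m - k) = X a b y (m - k) := by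
    intro k
    induction k with
    | zero => rw [Nat.sub_zero, hx.2, hy.2]
    | succ k ih =>
        rcases Nat.lt_or_ge k m with hk | hk
        · set i := m - (k+1) with hi
          have him : i < m := by omega
          have hmk : m - k = i + 1 := by omega
          rw [hmk] at ih
          obtain ⟨hxi, hdx⟩ := hx.1 ⟨i, him⟩
          obtain ⟨hyi, hdy⟩ := hy.1 ⟨i, him⟩
          have hdd : D a b x i = D a b y i := by rw [hdx, hdy]
          have h2 : 2 ≤ D a b x i := (mem_Ioc_of_digit hxi rfl).1
          have hA : (0:ℝ) < a i (D a b x i) := by exact_mod_cast ha i _ h2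
          have hB : (0:ℝ) < b i (D a b x i) := by exact_mod_cast hb i _ h2
          have hc : ((b i (D a b x i) : ℝ) / (a i (D a b x i) : ℝ)) ≠ 0 :=
            ne_of_gt (div_pos hB hA)
          rw [X_succ, X_succ, ← hdd] at ih
          have := mul_left_cancel₀ hc ih
          have hXX : X a b x i = X a b y i := by linarith
          exact hXX
        · have hmm : m - (k+1) = m - k := by omega
          rw [hmm]; exact ih
  have := key m
  rw [Nat.sub_self] at this
  exact this

lemma mem_S_of_not_inf {a b h : ℕ → ℕ → ℕ}
    (ha : ∀ k j, 2 ≤ j → 0 < a k j) (hb : ∀ k j, 2 ≤ j → 0 < b k j)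
    (hpos : ∀ k j, 2 ≤ j → 0 < h k j)
    (hab : ∀ k j, 2 ≤ j → b k j * h k j = a k j * j * (j - 1))
    {x : ℝ} (hx0 : 0 < x) (hx1 : x ≤ 1) (hninf : ¬ InfiniteROE a b x) :
    ∃ m : ℕ, ∃ d : Fin m → ℕ, x ∈ S a b m d := by
  classical
  rcases eq_or_lt_of_le hx1 with heq | hlt
  · refine ⟨0, fun i => i.elim0, ?_⟩
    exact ⟨fun i => i.elim0, heq.symm ▸ rfl⟩
  have hex : ∃ k, X a b x k ∉ Ioo (0:ℝ) 1 := by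
    by_contra hc; push_neg at hc; exact hninf hc
  have hspec : X a b x (Nat.find hex) ∉ Ioo (0:ℝ) 1 := Nat.find_spec hex
  have hmin : ∀ i, i < Nat.find hex → X a b x i ∈ Ioo (0:ℝ) 1 := by
    intro i hi
    by_contra hc
    exact Nat.find_min hex hi hc
  have hm0 : Nat.find hex ≠ 0 := by
    intro h0
    rw [h0] at hspec
    exact hspec ⟨hx0, hlt⟩
  obtain ⟨p, hp⟩ : ∃ p, Nat.find hex = p + 1 := ⟨Nat.find hex - 1, by omega⟩
  rw [hp] at hspec hmin
  have hXp : X a b x p ∈ Ioo (0:ℝ) 1 := hmin p (by omega)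
  obtain ⟨h2, hIoc⟩ := mem_Ioc_of_digit hXp (rfl : D a b x p = D a b x p)
  have hstep : X a b x (p+1) ∈ Ioc (0:ℝ) (1/(h p (D a b x p) : ℝ)) := by
    rw [X_succ]
    exact step_mem (ha p _ h2) (hb p _ h2) (hpos p _ h2) (hab p _ h2) h2 hIoc
  have hH1 : (1:ℝ) ≤ (h p (D a b x p) : ℝ) := by
    exact_mod_cast hpos p _ h2
  have hle1 : X a b x (p+1) ≤ 1 := le_trans hstep.2 (by
    rw [div_le_one (by linarith)]; linarith)
  have hXm1 : X a b x (p+1) = 1 := by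
    rcases eq_or_lt_of_le hle1 with he | hl
    · exact he
    · exact absurd ⟨hstep.1, hl⟩ hspec
  exact ⟨p+1, fun i => D a b x i, fun i => ⟨hmin i i.2, rfl⟩, hXm1⟩

lemma countable_bad {a b h : ℕ → ℕ → ℕ}
    (ha : ∀ k j, 2 ≤ j → 0 < a k j) (hb : ∀ k j, 2 ≤ j → 0 < b k j)
    (hpos : ∀ k j, 2 ≤ j → 0 < h k j)
    (hab : ∀ k j, 2 ≤ j → b k j * h k j = a k j * j * (j - 1)) :
    Set.Countable {x : ℝ | 0 < x ∧ x ≤ 1 ∧ ¬ InfiniteROE a b x} := by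
  have hsub : {x : ℝ | 0 < x ∧ x ≤ 1 ∧ ¬ InfiniteROE a b x} ⊆
      ⋃ (m : ℕ) (d : Fin m → ℕ), S a b m d := by
    rintro x ⟨hx0, hx1, hninf⟩
    obtain ⟨m, d, hmem⟩ := mem_S_of_not_inf ha hb hpos hab hx0 hx1 hninf
    exact Set.mem_iUnion.mpr ⟨m, Set.mem_iUnion.mpr ⟨d, hmem⟩⟩
  refine Set.Countable.mono hsub ?_
  exact Set.countable_iUnion fun m =>
    Set.countable_iUnion fun d => (S_subsingleton ha hb m d).countable

end Count


section Volume

lemma volume_good {a b : ℕ → ℕ → ℕ} {j : ℕ → ℕ} {n : ℕ}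
    (ha : ∀ k j, 2 ≤ j → 0 < a k j) (hb : ∀ k j, 2 ≤ j → 0 < b k j)
    (hj2 : ∀ i, i < n → 2 ≤ j i) (hn : 1 ≤ n) :
    volume {x | Good a b j (n-1) x} =
      ENNReal.ofReal ((∏ i ∈ Finset.range (n-1), (a i (j i):ℝ)/(b i (j i):ℝ)) *
        (1/((j (n-1):ℝ) * ((j (n-1):ℝ) - 1)))) := by
  set K := n - 1 with hK
  set P := ∏ i ∈ Finset.range K, (b i (j i):ℝ)/(a i (j i):ℝ) with hP
  have hP0 : 0 < P := Finset.prod_pos (fun i hi => by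
    have hi' : i < n := by
      rw [Finset.mem_range] at hi; omega
    have h2 := hj2 i hi'
    have hA : (0:ℝ) < a i (j i) := by exact_mod_cast ha i _ h2
    have hB : (0:ℝ) < b i (j i) := by exact_mod_cast hb i _ h2
    positivity)
  set q := Fmap a b j K 0 with hq
  have hjK : 2 ≤ j K := hj2 K (by omega)
  have hjK1 : (0:ℝ) < (j K:ℝ) - 1 := by have := cast_two_le hjK; linarith
  have hjK0 : (0:ℝ) < (j K:ℝ) := by linarith
  have hset : {x | Good a b j K x} =
      Ioc ((1/(j K:ℝ)-q)/P) ((1/((j K:ℝ)-1)-q)/P) := by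
    ext x
    simp only [Good, Set.mem_setOf_eq, Set.mem_Ioc, Fmap_affine a b j K x, ← hq, ← hP]
    rw [div_lt_iff₀ hP0, le_div_iff₀ hP0]
    constructor
    · rintro ⟨h1, h2⟩
      constructor <;> nlinarith [mul_comm P x]
    · rintro ⟨h1, h2⟩
      constructor <;> nlinarith [mul_comm P x]
  rw [hset, Real.volume_Ioc]
  congr 1
  have h1 : (1/((j K:ℝ)-1)-q)/P - (1/(j K:ℝ)-q)/P
      = (1/((j K:ℝ)-1) - 1/(j K:ℝ))/P := by ring
  have h2 : 1/((j K:ℝ)-1) - 1/(j K:ℝ) = 1/((j K:ℝ) * ((j K:ℝ)-1)) := by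
    field_simp; ring
  have h3 : P⁻¹ = ∏ i ∈ Finset.range K, (a i (j i):ℝ)/(b i (j i):ℝ) := by
    rw [hP, ← Finset.prod_inv_distrib]
    refine Finset.prod_congr rfl fun i _ => ?_
    rw [inv_div]
  rw [h1, h2, div_eq_mul_inv, h3]
  ring

lemma main_vol {a b h : ℕ → ℕ → ℕ} {n : ℕ} {j : ℕ → ℕ}
    (ha : ∀ k j, 2 ≤ j → 0 < a k j) (hb : ∀ k j, 2 ≤ j → 0 < b k j)
    (hpos : ∀ k j, 2 ≤ j → 0 < h k j)
    (hab : ∀ k j, 2 ≤ j → b k j * h k j = a k j * j * (j - 1))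
    (hn : 1 ≤ n) (hadm : Admissible h n j) :
    volume (cylinder a b n j) =
      ENNReal.ofReal ((∏ i ∈ Finset.range (n-1), (a i (j i):ℝ)/(b i (j i):ℝ)) *
        (1/((j (n-1):ℝ) * ((j (n-1):ℝ) - 1)))) := by
  have hj2 := j_ge_two hadm hpos
  rw [cylinder_eq ha hb hpos hab hadm hn]
  set s := {x | Good a b j (n-1) x} with hs
  set G := {x | InfiniteROE a b x} with hG
  have hdiff : s \ G ⊆ {x : ℝ | 0 < x ∧ x ≤ 1 ∧ ¬ InfiniteROE a b x} := by
    rintro x ⟨hgs, hgG⟩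
    have hg0 : Good a b j 0 x :=
      back_chain ha hb hpos hab hadm (n-1) (by omega) x hgs 0 (by omega)
    have hmem : x ∈ Ioc (1/(j 0:ℝ)) (1/((j 0:ℝ)-1)) := hg0
    have hj0 : 2 ≤ j 0 := hadm.1
    have h2r : (2:ℝ) ≤ j 0 := cast_two_le hj0
    refine ⟨lt_trans (by positivity) hmem.1, le_trans hmem.2 ?_, hgG⟩
    rw [div_le_one (by linarith)]; linarith
  have h0 : volume (s \ G) = 0 :=
    (Set.Countable.mono hdiff (countable_bad ha hb hpos hab)).measure_zero _
  have hvol : volume (s ∩ G) = volume s := by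
    refine le_antisymm (measure_mono Set.inter_subset_left) ?_
    calc volume s ≤ volume (s ∩ G) + volume (s \ G) := measure_le_inter_add_diff _ _ _
      _ = volume (s ∩ G) := by rw [h0, add_zero]
  rw [hvol, hs, volume_good ha hb hj2 hn]

end Volume


/-- For every `n ≥ 1` and every admissible sequence `(j_1, …, j_n)`, the Lebesgue
measure of the ROE cylinder satisfies
`λ(Δ_{j_1…j_n}) = (∏_{i=1}^{n-1} a_i(j_i)/b_i(j_i)) · 1/(j_n (j_n - 1))`;
in particular `λ(Δ_{j_1}) = 1/(j_1 (j_1 - 1))`. -/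
theorem measure_cylinder (a b h : ℕ → ℕ → ℕ)
    (ha : ∀ k j, 2 ≤ j → 0 < a k j) (hb : ∀ k j, 2 ≤ j → 0 < b k j)
    (hpos : ∀ k j, 2 ≤ j → 0 < h k j)
    (hab : ∀ k j, 2 ≤ j → b k j * h k j = a k j * j * (j - 1))
    (n : ℕ) (hn : 1 ≤ n) (j : ℕ → ℕ) (hadm : Admissible h n j) :
    volume (cylinder a b n j) =
      ENNReal.ofReal
        ((∏ i ∈ Finset.range (n - 1), (a i (j i) : ℝ) / (b i (j i) : ℝ)) *
          (1 / ((j (n - 1) : ℝ) * ((j (n - 1) : ℝ) - 1)))) ∧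
    ∀ j₁ : ℕ, 2 ≤ j₁ →
      volume (cylinder a b 1 (fun _ => j₁)) =
        ENNReal.ofReal (1 / ((j₁ : ℝ) * ((j₁ : ℝ) - 1))) := by
  constructor
  · exact main_vol ha hb hpos hab hn hadm
  · intro j₁ hj₁
    have := main_vol (a := a) (b := b) (h := h) (j := fun _ => j₁)
      ha hb hpos hab (le_refl 1) ⟨hj₁, by omega⟩
    simpa using this

end ROE
end

section
/- For every n ≥ 1 and every admissible sequence (j_1,…,j_n), the ROE cylinder Δ_{j_1…j_n} is, up to a λ-null set, the open interval whose infimum is Σ_{m=1}^{n} (∏_{i=1}^{m−1} a_i(j_i)/b_i(j_i)) · (1/j_m) and whose supremum is Σ_{m=1}^{n−1} (∏_{i=1}^{m−1} a_i(j_i)/b_i(j_i)) · (1/j_m) + (∏_{i=1}^{n−1} a_i(j_i)/b_i(j_i)) · (1/(j_n − 1)). -/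
open MeasureTheory Set

namespace ROE

lemma two_le_digit {y : ℝ} (hy : y ∈ Set.Ioo (0:ℝ) 1) : 2 ≤ (⌊1/y⌋).toNat + 1 := by
  have h1 : (1:ℝ) < 1/y := one_lt_one_div hy.1 hy.2
  have : (1:ℤ) ≤ ⌊1/y⌋ := Int.le_floor.mpr (by exact_mod_cast h1.le)
  omega

lemma mem_Ioc_of_digit_s1 {y : ℝ} (hy : y ∈ Set.Ioo (0:ℝ) 1) {j : ℕ}
    (hd : (⌊1/y⌋).toNat + 1 = j) : 1/(j:ℝ) < y ∧ y ≤ 1/((j:ℝ)-1) := by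
  have h2 : 2 ≤ j := hd ▸ two_le_digit hy
  have hfl : (⌊1/y⌋ : ℤ) = (j : ℤ) - 1 := by omega
  have hle : ((j:ℝ) - 1) ≤ 1/y := by
    have := Int.floor_le (1/y); rw [hfl] at this; push_cast at this; linarith
  have hlt : 1/y < (j:ℝ) := by
    have := Int.lt_floor_add_one (1/y); rw [hfl] at this; push_cast at this; linarith
  have hj0 : (0:ℝ) < (j:ℝ) := by positivity
  have hj1 : (0:ℝ) < (j:ℝ) - 1 := by
    have : (2:ℝ) ≤ (j:ℝ) := by exact_mod_cast h2
    linarith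
  constructor
  · rw [div_lt_iff₀ hy.1] at hlt
    rw [div_lt_iff₀ hj0]
    nlinarith
  · rw [le_div_iff₀ hy.1] at hle
    rw [le_div_iff₀ hj1]
    nlinarith


lemma digit_eq_of_mem_Ioo {y : ℝ} {j : ℕ} (h2 : 2 ≤ j)
    (h1 : 1/(j:ℝ) < y) (hlt : y < 1/((j:ℝ)-1)) : (⌊1/y⌋).toNat + 1 = j := by
  have hj0 : (0:ℝ) < (j:ℝ) := by positivity
  have hj1 : (0:ℝ) < (j:ℝ) - 1 := by
    have : (2:ℝ) ≤ (j:ℝ) := by exact_mod_cast h2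
    linarith
  have hy0 : 0 < y := lt_trans (by positivity) h1
  have hfl : ⌊1/y⌋ = (j:ℤ) - 1 := by
    rw [Int.floor_eq_iff]
    push_cast
    constructor
    · rw [lt_div_iff₀ hj1] at hlt
      rw [le_div_iff₀ hy0]
      nlinarith
    · rw [div_lt_iff₀ hj0] at h1
      rw [div_lt_iff₀ hy0]
      nlinarith
  omega

lemma key_id {a0 b0 h0 d : ℕ} (h2 : 2 ≤ d) (ha : 0 < a0) (hb : 0 < b0) (hh : 0 < h0)
    (hab : b0 * h0 = a0 * d * (d - 1)) :
    ((b0:ℝ)/(a0:ℝ)) * (1/((d:ℝ)-1) - 1/(d:ℝ)) = 1/(h0:ℝ) := by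
  have hc : (b0:ℝ) * (h0:ℝ) = (a0:ℝ) * (d:ℝ) * ((d:ℝ)-1) := by
    have := hab
    have h1 : 1 ≤ d := by omega
    push_cast [Nat.cast_sub h1] at *
    exact_mod_cast this
  have hd1 : ((d:ℝ)-1) ≠ 0 := by
    have : (2:ℝ) ≤ (d:ℝ) := by exact_mod_cast h2
    intro hcon; linarith
  have hd0 : (d:ℝ) ≠ 0 := by positivity
  have ha0 : (a0:ℝ) ≠ 0 := by positivity
  have hh0 : (h0:ℝ) ≠ 0 := by positivity
  field_simp
  nlinarith [hc]

lemma X_shift (a b : ℕ → ℕ → ℕ) (x : ℝ) (k : ℕ) :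
    X (fun i => a (i+1)) (fun i => b (i+1)) (X a b x 1) k = X a b x (k+1) := by
  induction k with
  | zero => rfl
  | succ k ih =>
    have hD : D (fun i => a (i+1)) (fun i => b (i+1)) (X a b x 1) k = D a b x (k+1) := by
      unfold D; rw [ih]
    rw [X_succ (fun i => a (i+1)) (fun i => b (i+1)) (X a b x 1) k, hD, ih,
      X_succ a b x (k+1)]

lemma D_shift (a b : ℕ → ℕ → ℕ) (x : ℝ) (k : ℕ) :
    D (fun i => a (i+1)) (fun i => b (i+1)) (X a b x 1) k = D a b x (k+1) := by
  unfold D; rw [X_shift]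

noncomputable def lo (a b : ℕ → ℕ → ℕ) (j : ℕ → ℕ) (n : ℕ) : ℝ :=
  ∑ m ∈ Finset.range n,
    (∏ i ∈ Finset.range m, (a i (j i) : ℝ) / (b i (j i) : ℝ)) * (1 / (j m : ℝ))

noncomputable def hi (a b : ℕ → ℕ → ℕ) (j : ℕ → ℕ) (n : ℕ) : ℝ :=
  lo a b j (n-1) +
    (∏ i ∈ Finset.range (n - 1), (a i (j i) : ℝ) / (b i (j i) : ℝ)) *
      (1 / ((j (n - 1) : ℝ) - 1))

lemma lo_succ (a b : ℕ → ℕ → ℕ) (j : ℕ → ℕ) (n : ℕ) :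
    lo a b j (n+1) = 1/(j 0 : ℝ) +
      ((a 0 (j 0) : ℝ)/(b 0 (j 0) : ℝ)) *
        lo (fun i => a (i+1)) (fun i => b (i+1)) (fun i => j (i+1)) n := by
  unfold lo
  rw [Finset.sum_range_succ', Finset.mul_sum]
  simp only [Finset.prod_range_succ', Finset.range_zero, Finset.prod_empty, one_mul]
  rw [add_comm]
  congr 1
  exact Finset.sum_congr rfl (fun m _ => by ring)

lemma hi_succ (a b : ℕ → ℕ → ℕ) (j : ℕ → ℕ) (n : ℕ) (hn : 1 ≤ n) :
    hi a b j (n+1) = 1/(j 0 : ℝ) +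
      ((a 0 (j 0) : ℝ)/(b 0 (j 0) : ℝ)) *
        hi (fun i => a (i+1)) (fun i => b (i+1)) (fun i => j (i+1)) n := by
  obtain ⟨m, rfl⟩ : ∃ m, n = m + 1 := ⟨n - 1, by omega⟩
  unfold hi
  simp only [Nat.add_sub_cancel]
  rw [lo_succ, Finset.prod_range_succ']
  ring

lemma lo_one (a b : ℕ → ℕ → ℕ) (j : ℕ → ℕ) : lo a b j 1 = 1/(j 0 : ℝ) := by
  simp [lo]

lemma hi_one (a b : ℕ → ℕ → ℕ) (j : ℕ → ℕ) : hi a b j 1 = 1/((j 0 : ℝ) - 1) := by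
  simp [hi, lo]

lemma lo_ge (a b : ℕ → ℕ → ℕ) (j : ℕ → ℕ) (n : ℕ) (hn : 1 ≤ n) :
    1/(j 0 : ℝ) ≤ lo a b j n := by
  have h0 : (0:ℕ) ∈ Finset.range n := Finset.mem_range.mpr hn
  have := Finset.single_le_sum (f := fun m =>
    (∏ i ∈ Finset.range m, (a i (j i) : ℝ) / (b i (j i) : ℝ)) * (1 / (j m : ℝ)))
    (fun i _ => by positivity) h0
  simpa [lo] using this





lemma mem_Ioo01 {x : ℝ} {j0 : ℕ} (h2 : 2 ≤ j0) (h1 : 1/(j0:ℝ) < x)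
    (hl : x < 1/((j0:ℝ)-1)) : x ∈ Set.Ioo (0:ℝ) 1 := by
  have hj : (2:ℝ) ≤ (j0:ℝ) := by exact_mod_cast h2
  have hj1 : (0:ℝ) < (j0:ℝ)-1 := by linarith
  constructor
  · have : (0:ℝ) < 1/(j0:ℝ) := by positivity
    linarith
  · have : 1/((j0:ℝ)-1) ≤ 1 := by rw [div_le_one hj1]; linarith
    linarith

lemma X_succ_pos_le (a b h : ℕ → ℕ → ℕ)
    (ha : ∀ k m, 2 ≤ m → 0 < a k m) (hb : ∀ k m, 2 ≤ m → 0 < b k m)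
    (hpos : ∀ k m, 2 ≤ m → 0 < h k m)
    (hab : ∀ k m, 2 ≤ m → b k m * h k m = a k m * m * (m - 1))
    (x : ℝ) (k : ℕ) (hx : X a b x k ∈ Set.Ioo (0:ℝ) 1) :
    0 < X a b x (k+1) ∧ X a b x (k+1) ≤ 1/(h k (D a b x k) : ℝ) := by
  have h2 : 2 ≤ D a b x k := two_le_digit hx
  obtain ⟨hl, hr⟩ := mem_Ioc_of_digit_s1 (j := D a b x k) hx rfl
  have hba : (0:ℝ) < (b k (D a b x k):ℝ)/(a k (D a b x k):ℝ) := by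
    have h1 := ha k (D a b x k) h2
    have h1' := hb k (D a b x k) h2
    positivity
  have key := key_id h2 (ha k (D a b x k) h2) (hb k (D a b x k) h2)
    (hpos k (D a b x k) h2) (hab k (D a b x k) h2)
  constructor
  · rw [X_succ]
    exact mul_pos hba (by linarith)
  · rw [X_succ, ← key]
    have hstep : X a b x k - 1/(D a b x k:ℝ) ≤ 1/((D a b x k:ℝ)-1) - 1/(D a b x k:ℝ) := by
      linarith
    exact mul_le_mul_of_nonneg_left hstep hba.le






lemma adm_shift {h : ℕ → ℕ → ℕ} {n : ℕ} {j : ℕ → ℕ}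
    (hpos : ∀ k m, 2 ≤ m → 0 < h k m) (hn : 1 ≤ n)
    (hadm : Admissible h (n+1) j) :
    Admissible (fun i => h (i+1)) n (fun i => j (i+1)) := by
  constructor
  · show 2 ≤ j 1
    have h1 : h 0 (j 0) < j 1 := hadm.2 0 (by omega)
    have := hpos 0 (j 0) hadm.1
    omega
  · intro i hi0
    exact hadm.2 (i+1) (by omega)

lemma key_id2 {a0 b0 h0 d : ℕ} (h2 : 2 ≤ d) (ha : 0 < a0) (hb : 0 < b0) (hh : 0 < h0)
    (hab : b0 * h0 = a0 * d * (d - 1)) :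
    ((a0:ℝ)/(b0:ℝ)) * (1/(h0:ℝ)) = 1/((d:ℝ)-1) - 1/(d:ℝ) := by
  have key := key_id h2 ha hb hh hab
  have ha0 : (a0:ℝ) ≠ 0 := by positivity
  have hb0 : (b0:ℝ) ≠ 0 := by positivity
  rw [← key]
  field_simp

lemma hi_le : ∀ (n : ℕ), 1 ≤ n → ∀ (a b h : ℕ → ℕ → ℕ) (j : ℕ → ℕ),
    (∀ k m, 2 ≤ m → 0 < a k m) → (∀ k m, 2 ≤ m → 0 < b k m) →
    (∀ k m, 2 ≤ m → 0 < h k m) →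
    (∀ k m, 2 ≤ m → b k m * h k m = a k m * m * (m - 1)) →
    Admissible h n j → hi a b j n ≤ 1/((j 0 : ℝ) - 1) := by
  intro n hn
  induction n, hn using Nat.le_induction with
  | base =>
    intro a b h j _ _ _ _ _
    rw [hi_one]
  | succ n hn ih =>
    intro a b h j ha hb hpos hab hadm
    have h20 : 2 ≤ j 0 := hadm.1
    have hh0 := hpos 0 (j 0) h20
    have h21 : 2 ≤ j 1 := by
      have h1 : h 0 (j 0) < j 1 := hadm.2 0 (by omega)
      have := hpos 0 (j 0) h20
      omega
    have hadm' := adm_shift hpos hn hadm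
    have ih' := ih (fun i => a (i+1)) (fun i => b (i+1)) (fun i => h (i+1)) (fun i => j (i+1))
      (fun k m hm => ha (k+1) m hm) (fun k m hm => hb (k+1) m hm)
      (fun k m hm => hpos (k+1) m hm) (fun k m hm => hab (k+1) m hm) hadm'
    rw [hi_succ a b j n hn]
    have ha0 := ha 0 (j 0) h20
    have hb0 := hb 0 (j 0) h20
    have hr0 : (0:ℝ) < (a 0 (j 0):ℝ)/(b 0 (j 0):ℝ) := by positivity
    have key2 := key_id2 h20 ha0 hb0 hh0 (hab 0 (j 0) h20)
    have hja : (h 0 (j 0):ℝ) ≤ (j 1:ℝ) - 1 := by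
      have h1 : h 0 (j 0) < j 1 := hadm.2 0 (by omega)
      have : (h 0 (j 0) : ℝ) + 1 ≤ (j 1 : ℝ) := by exact_mod_cast h1
      linarith
    have hhr : (0:ℝ) < (h 0 (j 0):ℝ) := by exact_mod_cast hh0
    have h1le : 1/((j 1:ℝ)-1) ≤ 1/(h 0 (j 0):ℝ) := by
      apply one_div_le_one_div_of_le hhr hja
    have m1 : ((a 0 (j 0):ℝ)/(b 0 (j 0):ℝ)) *
        hi (fun i => a (i+1)) (fun i => b (i+1)) (fun i => j (i+1)) n
        ≤ ((a 0 (j 0):ℝ)/(b 0 (j 0):ℝ)) * (1/((j 1:ℝ)-1)) :=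
      mul_le_mul_of_nonneg_left ih' hr0.le
    have m2 : ((a 0 (j 0):ℝ)/(b 0 (j 0):ℝ)) * (1/((j 1:ℝ)-1))
        ≤ ((a 0 (j 0):ℝ)/(b 0 (j 0):ℝ)) * (1/(h 0 (j 0):ℝ)) :=
      mul_le_mul_of_nonneg_left h1le hr0.le
    linarith





lemma fwd : ∀ (n : ℕ), 1 ≤ n → ∀ (a b h : ℕ → ℕ → ℕ) (j : ℕ → ℕ),
    (∀ k m, 2 ≤ m → 0 < a k m) → (∀ k m, 2 ≤ m → 0 < b k m) →
    (∀ k m, 2 ≤ m → 0 < h k m) →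
    (∀ k m, 2 ≤ m → b k m * h k m = a k m * m * (m - 1)) →
    Admissible h n j → ∀ x : ℝ, lo a b j n < x → x < hi a b j n →
    (∀ i < n, D a b x i = j i) ∧ (∀ i ≤ n, X a b x i ∈ Set.Ioo (0:ℝ) 1) := by
  intro n hn
  induction n, hn using Nat.le_induction with
  | base =>
    intro a b h j ha hb hpos hab hadm x hlo hhi
    rw [lo_one] at hlo
    rw [hi_one] at hhi
    have h20 : 2 ≤ j 0 := hadm.1
    have hx0 : x ∈ Set.Ioo (0:ℝ) 1 := mem_Ioo01 h20 hlo hhi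
    have hD0 : D a b x 0 = j 0 := digit_eq_of_mem_Ioo h20 hlo hhi
    have ha0 := ha 0 (j 0) h20
    have hb0 := hb 0 (j 0) h20
    have hh0 := hpos 0 (j 0) h20
    have hba : (0:ℝ) < (b 0 (j 0):ℝ)/(a 0 (j 0):ℝ) := by positivity
    have key := key_id h20 ha0 hb0 hh0 (hab 0 (j 0) h20)
    have e : X a b x 1 = ((b 0 (j 0):ℝ)/(a 0 (j 0):ℝ)) * (x - 1/(j 0:ℝ)) := by
      rw [X_succ, hD0]; rfl
    refine ⟨fun i hi0 => by interval_cases i; exact hD0, fun i hi0 => ?_⟩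
    interval_cases i
    · exact hx0
    · constructor
      · rw [e]
        exact mul_pos hba (by linarith)
      · have hlt : X a b x 1 < 1/(h 0 (j 0):ℝ) := by
          rw [e, ← key]
          exact mul_lt_mul_of_pos_left (by linarith) hba
        have hle1 : 1/(h 0 (j 0):ℝ) ≤ 1 := by
          have : (1:ℝ) ≤ (h 0 (j 0):ℝ) := by exact_mod_cast hh0
          rw [div_le_one (by linarith)]
          exact this
        linarith
  | succ n hn ih =>
    intro a b h j ha hb hpos hab hadm x hlo hhi
    have h20 : 2 ≤ j 0 := hadm.1
    have hadm' := adm_shift hpos hn hadm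
    have hxlow : 1/(j 0:ℝ) < x := lt_of_le_of_lt (lo_ge a b j (n+1) (by omega)) hlo
    have hxhigh : x < 1/((j 0:ℝ)-1) :=
      lt_of_lt_of_le hhi (hi_le (n+1) (by omega) a b h j ha hb hpos hab hadm)
    have hx0 : x ∈ Set.Ioo (0:ℝ) 1 := mem_Ioo01 h20 hxlow hxhigh
    have hD0 : D a b x 0 = j 0 := digit_eq_of_mem_Ioo h20 hxlow hxhigh
    have ha0 := ha 0 (j 0) h20
    have hb0 := hb 0 (j 0) h20
    have hA : (0:ℝ) < (a 0 (j 0):ℝ) := by exact_mod_cast ha0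
    have hB : (0:ℝ) < (b 0 (j 0):ℝ) := by exact_mod_cast hb0
    have e : X a b x 1 = ((b 0 (j 0):ℝ)/(a 0 (j 0):ℝ)) * (x - 1/(j 0:ℝ)) := by
      rw [X_succ, hD0]; rfl
    rw [lo_succ a b j n] at hlo
    rw [hi_succ a b j n hn] at hhi
    have h1 : lo (fun i => a (i+1)) (fun i => b (i+1)) (fun i => j (i+1)) n < X a b x 1 := by
      rw [e]
      have heq : lo (fun i => a (i+1)) (fun i => b (i+1)) (fun i => j (i+1)) n
          = ((b 0 (j 0):ℝ)/(a 0 (j 0):ℝ)) * (((a 0 (j 0):ℝ)/(b 0 (j 0):ℝ)) *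
            lo (fun i => a (i+1)) (fun i => b (i+1)) (fun i => j (i+1)) n) := by
        field_simp
      rw [heq]
      exact mul_lt_mul_of_pos_left (by linarith) (by positivity)
    have h2 : X a b x 1 < hi (fun i => a (i+1)) (fun i => b (i+1)) (fun i => j (i+1)) n := by
      rw [e]
      have heq : hi (fun i => a (i+1)) (fun i => b (i+1)) (fun i => j (i+1)) n
          = ((b 0 (j 0):ℝ)/(a 0 (j 0):ℝ)) * (((a 0 (j 0):ℝ)/(b 0 (j 0):ℝ)) *
            hi (fun i => a (i+1)) (fun i => b (i+1)) (fun i => j (i+1)) n) := by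
        field_simp
      rw [heq]
      exact mul_lt_mul_of_pos_left (by linarith) (by positivity)
    have IH := ih (fun i => a (i+1)) (fun i => b (i+1)) (fun i => h (i+1)) (fun i => j (i+1))
      (fun k m hm => ha (k+1) m hm) (fun k m hm => hb (k+1) m hm)
      (fun k m hm => hpos (k+1) m hm) (fun k m hm => hab (k+1) m hm)
      hadm' (X a b x 1) h1 h2
    constructor
    · intro i hi0
      cases i with
      | zero => exact hD0
      | succ i =>
        have := IH.1 i (by omega)
        rwa [D_shift] at this
    · intro i hi0
      cases i with
      | zero => exact hx0
      | succ i =>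
        have := IH.2 i (by omega)
        rwa [X_shift] at this

lemma bwd : ∀ (n : ℕ), 1 ≤ n → ∀ (a b : ℕ → ℕ → ℕ) (j : ℕ → ℕ),
    (∀ k m, 2 ≤ m → 0 < a k m) → (∀ k m, 2 ≤ m → 0 < b k m) →
    ∀ x : ℝ, (∀ i ≤ n, X a b x i ∈ Set.Ioo (0:ℝ) 1) → (∀ i < n, D a b x i = j i) →
    lo a b j n < x ∧ x ≤ hi a b j n := by
  intro n hn
  induction n, hn using Nat.le_induction with
  | base =>
    intro a b j ha hb x hX hD
    have hx : x ∈ Set.Ioo (0:ℝ) 1 := hX 0 (by omega)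
    have hd : D a b x 0 = j 0 := hD 0 (by omega)
    have := mem_Ioc_of_digit_s1 (j := j 0) hx hd
    rw [lo_one, hi_one]
    exact this
  | succ n hn ih =>
    intro a b j ha hb x hX hD
    have hx : x ∈ Set.Ioo (0:ℝ) 1 := hX 0 (by omega)
    have hd0 : D a b x 0 = j 0 := hD 0 (by omega)
    have h20 : 2 ≤ j 0 := hd0 ▸ two_le_digit hx
    have ha0 := ha 0 (j 0) h20
    have hb0 := hb 0 (j 0) h20
    have hA : (0:ℝ) < (a 0 (j 0):ℝ) := by exact_mod_cast ha0
    have hB : (0:ℝ) < (b 0 (j 0):ℝ) := by exact_mod_cast hb0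
    have IH := ih (fun i => a (i+1)) (fun i => b (i+1)) (fun i => j (i+1))
      (fun k m hm => ha (k+1) m hm) (fun k m hm => hb (k+1) m hm) (X a b x 1)
      (fun i hi0 => by rw [X_shift]; exact hX (i+1) (by omega))
      (fun i hi0 => by rw [D_shift]; exact hD (i+1) (by omega))
    have e : X a b x 1 = ((b 0 (j 0):ℝ)/(a 0 (j 0):ℝ)) * (x - 1/(j 0:ℝ)) := by
      rw [X_succ, hd0]; rfl
    obtain ⟨l1, l2⟩ := IH
    rw [e] at l1 l2
    have heq : ∀ t : ℝ, ((a 0 (j 0):ℝ)/(b 0 (j 0):ℝ)) *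
        (((b 0 (j 0):ℝ)/(a 0 (j 0):ℝ)) * t) = t := by
      intro t; field_simp
    rw [lo_succ a b j n, hi_succ a b j n hn]
    constructor
    · have := mul_lt_mul_of_pos_left l1 (show (0:ℝ) < (a 0 (j 0):ℝ)/(b 0 (j 0):ℝ) by positivity)
      rw [heq] at this
      linarith
    · have := mul_le_mul_of_nonneg_left l2 (show (0:ℝ) ≤ (a 0 (j 0):ℝ)/(b 0 (j 0):ℝ) by positivity)
      rw [heq] at this
      linarith






lemma inj0 (a b : ℕ → ℕ → ℕ)
    (ha : ∀ k m, 2 ≤ m → 0 < a k m) (hb : ∀ k m, 2 ≤ m → 0 < b k m)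
    (x y : ℝ) (hx : x ∈ Set.Ioo (0:ℝ) 1)
    (hd : D a b x 0 = D a b y 0) (h1 : X a b x 1 = X a b y 1) : x = y := by
  have h2 : 2 ≤ D a b x 0 := two_le_digit hx
  have ha0 := ha 0 (D a b x 0) h2
  have hb0 := hb 0 (D a b x 0) h2
  have hBA : (0:ℝ) < (b 0 (D a b x 0):ℝ)/(a 0 (D a b x 0):ℝ) := by positivity
  have ex : X a b x 1 = ((b 0 (D a b x 0):ℝ)/(a 0 (D a b x 0):ℝ)) *
      (x - 1/(D a b x 0:ℝ)) := by rw [X_succ]; rfl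
  have ey : X a b y 1 = ((b 0 (D a b x 0):ℝ)/(a 0 (D a b x 0):ℝ)) *
      (y - 1/(D a b x 0:ℝ)) := by rw [X_succ, ← hd]; rfl
  rw [ex, ey] at h1
  have := mul_left_cancel₀ (ne_of_gt hBA) h1
  linarith

lemma inj : ∀ (k : ℕ) (a b : ℕ → ℕ → ℕ),
    (∀ k m, 2 ≤ m → 0 < a k m) → (∀ k m, 2 ≤ m → 0 < b k m) →
    ∀ x y : ℝ, (∀ i ≤ k, X a b x i ∈ Set.Ioo (0:ℝ) 1) →
    (∀ i ≤ k, D a b x i = D a b y i) →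
    X a b x (k+1) = X a b y (k+1) → x = y := by
  intro k
  induction k with
  | zero =>
    intro a b ha hb x y hX hD h1
    exact inj0 a b ha hb x y (hX 0 le_rfl) (hD 0 le_rfl) h1
  | succ k ihk =>
    intro a b ha hb x y hX hD h1
    have hx : x ∈ Set.Ioo (0:ℝ) 1 := hX 0 (by omega)
    have hx1y1 : X a b x 1 = X a b y 1 := by
      apply ihk (fun i => a (i+1)) (fun i => b (i+1))
        (fun k m hm => ha (k+1) m hm) (fun k m hm => hb (k+1) m hm)
        (X a b x 1) (X a b y 1)
      · intro i hi0
        rw [X_shift]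
        exact hX (i+1) (by omega)
      · intro i hi0
        rw [D_shift, D_shift]
        exact hD (i+1) (by omega)
      · rw [X_shift, X_shift]
        exact h1
    exact inj0 a b ha hb x y hx (hD 0 (by omega)) hx1y1

lemma bad_countable (a b h : ℕ → ℕ → ℕ)
    (ha : ∀ k m, 2 ≤ m → 0 < a k m) (hb : ∀ k m, 2 ≤ m → 0 < b k m)
    (hpos : ∀ k m, 2 ≤ m → 0 < h k m)
    (hab : ∀ k m, 2 ≤ m → b k m * h k m = a k m * m * (m - 1)) :
    {x : ℝ | x ∈ Set.Ioo (0:ℝ) 1 ∧ ¬ InfiniteROE a b x}.Countable := by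
  classical
  have hsub : {x : ℝ | x ∈ Set.Ioo (0:ℝ) 1 ∧ ¬ InfiniteROE a b x} ⊆
      ⋃ k : ℕ, {x : ℝ | (∀ i ≤ k, X a b x i ∈ Set.Ioo (0:ℝ) 1) ∧ X a b x (k+1) = 1} := by
    rintro x ⟨hx01, hninf⟩
    have hex : ∃ m, X a b x m ∉ Set.Ioo (0:ℝ) 1 := by
      by_contra hcon
      push_neg at hcon
      exact hninf (fun k => hcon k)
    have hm := Nat.find_spec hex
    have hmin : ∀ i < Nat.find hex, X a b x i ∈ Set.Ioo (0:ℝ) 1 := by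
      intro i hi0
      have := Nat.find_min hex hi0
      simpa using this
    have hm1 : 1 ≤ Nat.find hex := by
      rcases Nat.eq_zero_or_pos (Nat.find hex) with h0 | h1
      · exfalso
        rw [h0] at hm
        exact hm hx01
      · exact h1
    obtain ⟨k, hk⟩ : ∃ k, Nat.find hex = k + 1 := ⟨Nat.find hex - 1, by omega⟩
    rw [hk] at hm hmin
    refine Set.mem_iUnion.mpr ⟨k, fun i hik => hmin i (by omega), ?_⟩
    have hkX : X a b x k ∈ Set.Ioo (0:ℝ) 1 := hmin k (by omega)
    obtain ⟨p1, p2⟩ := X_succ_pos_le a b h ha hb hpos hab x k hkX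
    have h2 : 2 ≤ D a b x k := two_le_digit hkX
    have hh1 : (1:ℝ) ≤ (h k (D a b x k):ℝ) := by
      exact_mod_cast hpos k (D a b x k) h2
    have hle1 : 1/(h k (D a b x k):ℝ) ≤ 1 := by
      rw [div_le_one (by linarith)]
      exact hh1
    have hle : X a b x (k+1) ≤ 1 := le_trans p2 hle1
    by_contra hne
    exact hm ⟨p1, lt_of_le_of_ne hle hne⟩
  apply Set.Countable.mono hsub
  apply Set.countable_iUnion
  intro k
  have hmt : Set.MapsTo (fun (x : ℝ) (i : Fin (k+1)) => D a b x i)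
      {x : ℝ | (∀ i ≤ k, X a b x i ∈ Set.Ioo (0:ℝ) 1) ∧ X a b x (k+1) = 1}
      (Set.univ : Set (Fin (k+1) → ℕ)) := fun x _ => trivial
  apply hmt.countable_of_injOn ?_ Set.countable_univ
  rintro x ⟨hxX, hx1⟩ y ⟨hyX, hy1⟩ hfeq
  apply inj k a b ha hb x y hxX
  · intro i hik
    have := congrFun hfeq ⟨i, by omega⟩
    simpa using this
  · rw [hx1, hy1]



/-- For every `n ≥ 1` and every admissible sequence `(j_1, …, j_n)`, the ROE
cylinder `Δ_{j_1…j_n}` is, up to a `λ`-null set, the open interval whose infimum is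
`Σ_{m=1}^{n} (∏_{i=1}^{m-1} a_i(j_i)/b_i(j_i)) · (1/j_m)` and whose supremum is
`Σ_{m=1}^{n-1} (∏_{i=1}^{m-1} a_i(j_i)/b_i(j_i)) · (1/j_m)
  + (∏_{i=1}^{n-1} a_i(j_i)/b_i(j_i)) · (1/(j_n - 1))`. -/
theorem cylinder_ae_eq_Ioo (a b h : ℕ → ℕ → ℕ)
    (ha : ∀ k j, 2 ≤ j → 0 < a k j) (hb : ∀ k j, 2 ≤ j → 0 < b k j)
    (hpos : ∀ k j, 2 ≤ j → 0 < h k j)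
    (hab : ∀ k j, 2 ≤ j → b k j * h k j = a k j * j * (j - 1))
    (n : ℕ) (hn : 1 ≤ n) (j : ℕ → ℕ) (hadm : Admissible h n j) :
    cylinder a b n j =ᵐ[volume]
      Set.Ioo
        (∑ m ∈ Finset.range n,
          (∏ i ∈ Finset.range m, (a i (j i) : ℝ) / (b i (j i) : ℝ)) * (1 / (j m : ℝ)))
        ((∑ m ∈ Finset.range (n - 1),
          (∏ i ∈ Finset.range m, (a i (j i) : ℝ) / (b i (j i) : ℝ)) * (1 / (j m : ℝ))) +
          (∏ i ∈ Finset.range (n - 1), (a i (j i) : ℝ) / (b i (j i) : ℝ)) *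
            (1 / ((j (n - 1) : ℝ) - 1))) := by
  show cylinder a b n j =ᵐ[volume] Set.Ioo (lo a b j n) (hi a b j n)
  rw [MeasureTheory.ae_eq_set]
  constructor
  · apply measure_mono_null (t := {hi a b j n})
    · rintro x ⟨⟨hx01, hinf, hdig⟩, hnot⟩
      have hbwd := bwd n hn a b j ha hb x (fun i _ => hinf i) hdig
      have hxe : x = hi a b j n := by
        by_contra hne
        exact hnot ⟨hbwd.1, lt_of_le_of_ne hbwd.2 hne⟩
      simp [hxe]
    · exact measure_singleton _
  · apply measure_mono_null
      (t := {x : ℝ | x ∈ Set.Ioo (0:ℝ) 1 ∧ ¬ InfiniteROE a b x})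
    · rintro x ⟨hIoo, hnot⟩
      have hf := fwd n hn a b h j ha hb hpos hab hadm x hIoo.1 hIoo.2
      have hx01 : x ∈ Set.Ioo (0:ℝ) 1 := hf.2 0 (by omega)
      exact ⟨hx01, fun hinf => hnot ⟨hx01, hinf, hf.1⟩⟩
    · exact (bad_countable a b h ha hb hpos hab).measure_zero _

end ROE
end

section
/- Assume Hypothesis (H). Then for λ-almost every x ∈ (0,1), every positive integer i occurs only finitely many times among the difference ROE digits of x; that is, λ-almost every x satisfies: for every i ≥ 1 the set {k : α_k(x) = i} is finite. In particular, for each fixed digit i₀ the set A_{i₀} = {x : α_k(x) = i₀ for infinitely many k} has λ(A_{i₀}) = 0. -/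
open MeasureTheory Set

namespace ROE

lemma digit_two_le {t : ℝ} (ht : t ∈ Set.Ioo (0:ℝ) 1) : 2 ≤ (⌊1/t⌋).toNat + 1 := by
  have h1 : (1:ℝ) < 1/t := one_lt_one_div ht.1 ht.2
  have : (1:ℤ) ≤ ⌊1/t⌋ := Int.le_floor.mpr (by exact_mod_cast h1.le)
  omega

lemma digit_bounds {t : ℝ} (ht : t ∈ Set.Ioo (0:ℝ) 1) :
    1 / (((⌊1/t⌋).toNat + 1 : ℕ) : ℝ) < t ∧ t ≤ 1 / ((((⌊1/t⌋).toNat + 1 : ℕ) : ℝ) - 1) := by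
  have h1 : (1:ℝ) < 1/t := one_lt_one_div ht.1 ht.2
  have hfl : (1:ℤ) ≤ ⌊1/t⌋ := Int.le_floor.mpr (by exact_mod_cast h1.le)
  have hz : ((⌊1/t⌋.toNat + 1 : ℕ) : ℤ) = ⌊1/t⌋ + 1 := by omega
  have hcast : ((((⌊1/t⌋).toNat + 1 : ℕ)) : ℝ) = (⌊1/t⌋ : ℝ) + 1 := by exact_mod_cast hz
  have hlow : ((⌊1/t⌋ : ℝ)) ≤ 1/t := Int.floor_le _
  have hhigh : 1/t < (⌊1/t⌋ : ℝ) + 1 := Int.lt_floor_add_one _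
  have hfl1 : (1:ℝ) ≤ (⌊1/t⌋ : ℝ) := by exact_mod_cast hfl
  have ht0 : 0 < t := ht.1
  have key : t * (1/t) = 1 := by field_simp
  rw [hcast]
  constructor
  · rw [div_lt_iff₀ (by nlinarith)]
    nlinarith [mul_lt_mul_of_pos_left hhigh ht0]
  · rw [le_div_iff₀ (by nlinarith)]
    nlinarith [mul_le_mul_of_nonneg_left hlow ht0.le]

lemma Dge2 {a b : ℕ → ℕ → ℕ} {x : ℝ} (hx : InfiniteROE a b x) (m : ℕ) :
    2 ≤ D a b x m := digit_two_le (hx m)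

lemma X_mem_Ioc {a b : ℕ → ℕ → ℕ} {x : ℝ} (hx : InfiniteROE a b x) (m : ℕ) :
    1 / ((D a b x m : ℕ) : ℝ) < X a b x m ∧
      X a b x m ≤ 1 / (((D a b x m : ℕ) : ℝ) - 1) := digit_bounds (hx m)

noncomputable def Mfun (a b : ℕ → ℕ → ℕ) (j : ℕ → ℕ) : ℕ → ℕ → ℝ → ℝ
  | _, 0, t => t
  | m, p+1, t => 1/(j m : ℝ) + ((a m (j m) : ℝ)/(b m (j m) : ℝ)) * Mfun a b j (m+1) p t

noncomputable def slope (a b : ℕ → ℕ → ℕ) (j : ℕ → ℕ) (m p : ℕ) : ℝ :=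
  ∏ q ∈ Finset.range p, ((a (m+q) (j (m+q)) : ℝ)/(b (m+q) (j (m+q)) : ℝ))

lemma Mfun_affine (a b : ℕ → ℕ → ℕ) (j : ℕ → ℕ) (m p : ℕ) (t : ℝ) :
    Mfun a b j m p t = Mfun a b j m p 0 + slope a b j m p * t := by
  induction p generalizing m t with
  | zero => simp [Mfun, slope]
  | succ p ih =>
    have hprod : slope a b j m (p+1)
        = ((a m (j m) : ℝ)/(b m (j m) : ℝ)) * slope a b j (m+1) p := by
      unfold slope
      rw [Finset.prod_range_succ']
      have e : ∀ q ∈ Finset.range p,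
          ((a (m+(q+1)) (j (m+(q+1))) : ℝ)/(b (m+(q+1)) (j (m+(q+1))) : ℝ))
          = ((a (m+1+q) (j (m+1+q)) : ℝ)/(b (m+1+q) (j (m+1+q)) : ℝ)) := by
        intro q _; rw [show m+(q+1)=m+1+q from by omega]
      rw [Finset.prod_congr rfl e]
      simp [mul_comm]
    simp only [Mfun]
    rw [ih m.succ, ih m.succ 0, hprod]
    ring

lemma slope_pos {a b : ℕ → ℕ → ℕ} (ha : ∀ k j, 2 ≤ j → 0 < a k j)
    (hb : ∀ k j, 2 ≤ j → 0 < b k j) {j : ℕ → ℕ} {m p : ℕ}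
    (hj : ∀ q < p, 2 ≤ j (m+q)) : 0 < slope a b j m p := by
  apply Finset.prod_pos
  intro q hq
  rw [Finset.mem_range] at hq
  have := hj q hq
  exact div_pos (by exact_mod_cast ha _ _ this) (by exact_mod_cast hb _ _ this)

lemma image_affine_Ioc (c s u v : ℝ) (hs : 0 < s) :
    (fun t => c + s*t) '' Set.Ioc u v = Set.Ioc (c + s*u) (c + s*v) := by
  ext y
  simp only [Set.mem_image, Set.mem_Ioc]
  constructor
  · rintro ⟨t, ⟨h1, h2⟩, rfl⟩
    constructor <;> nlinarith
  · rintro ⟨h1, h2⟩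
    refine ⟨(y - c)/s, ⟨by rw [lt_div_iff₀ hs]; nlinarith, by rw [div_le_iff₀ hs]; nlinarith⟩,
      by field_simp; ring⟩

lemma Mfun_image (a b : ℕ → ℕ → ℕ) (j : ℕ → ℕ) (m p : ℕ) (u v : ℝ)
    (hs : 0 < slope a b j m p) :
    Mfun a b j m p '' Set.Ioc u v = Set.Ioc (Mfun a b j m p u) (Mfun a b j m p v) := by
  have h1 : Mfun a b j m p '' Set.Ioc u v
      = (fun t => Mfun a b j m p 0 + slope a b j m p * t) '' Set.Ioc u v := by
    apply Set.image_congr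
    intro t _
    exact Mfun_affine a b j m p t
  rw [h1, image_affine_Ioc _ _ _ _ hs, ← Mfun_affine, ← Mfun_affine]

lemma Mfun_congr (a b : ℕ → ℕ → ℕ) {j j' : ℕ → ℕ} (m p : ℕ)
    (hjj : ∀ q < p, j (m+q) = j' (m+q)) (t : ℝ) :
    Mfun a b j m p t = Mfun a b j' m p t := by
  induction p generalizing m with
  | zero => rfl
  | succ p ih =>
    have h0 : j m = j' m := by have := hjj 0 (by omega); simpa using this
    simp only [Mfun, h0]
    congr 1
    congr 1
    apply ih
    intro q hq
    have : m + 1 + q = m + (q+1) := by omega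
    rw [this]
    exact hjj (q+1) (by omega)

lemma Mfun_comp (a b : ℕ → ℕ → ℕ) (j : ℕ → ℕ) (m p q : ℕ) (t : ℝ) :
    Mfun a b j m (p+q) t = Mfun a b j m p (Mfun a b j (m+p) q t) := by
  induction p generalizing m with
  | zero => simp [Mfun]
  | succ p ih =>
    have : p + 1 + q = (p + q) + 1 := by omega
    rw [this]
    simp only [Mfun]
    rw [ih (m+1)]
    have : m + 1 + p = m + (p+1) := by omega
    rw [this]

lemma step_mem_real {A B H J s : ℝ} (hA : 0 < A) (hB : 0 < B) (hH : 0 < H)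
    (hJ : 2 ≤ J) (habh : B * H = A * J * (J - 1)) (hs0 : 0 < s) (hs1 : s ≤ 1/H) :
    1/J < 1/J + (A/B) * s ∧ 1/J + (A/B) * s ≤ 1/(J-1) := by
  have hJ0 : 0 < J := by linarith
  have hJ1 : 0 < J - 1 := by linarith
  constructor
  · have : 0 < (A/B) * s := mul_pos (div_pos hA hB) hs0
    linarith
  · have key : (A/B) * (1/H) = 1/(J*(J-1)) := by
      rw [div_mul_div_comm, mul_one]
      rw [div_eq_div_iff (by positivity) (by positivity)]
      nlinarith
    have h2 : (A/B) * s ≤ (A/B) * (1/H) :=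
      mul_le_mul_of_nonneg_left hs1 (le_of_lt (div_pos hA hB))
    have h3 : 1/J + 1/(J*(J-1)) = 1/(J-1) := by
      field_simp
      ring
    linarith [key ▸ h2]

lemma nest {a b h : ℕ → ℕ → ℕ} (ha : ∀ k j, 2 ≤ j → 0 < a k j)
    (hb : ∀ k j, 2 ≤ j → 0 < b k j) (hpos : ∀ k j, 2 ≤ j → 0 < h k j)
    (hab : ∀ k j, 2 ≤ j → b k j * h k j = a k j * j * (j - 1))
    (j : ℕ → ℕ) : ∀ p : ℕ, 1 ≤ p → ∀ m : ℕ, (∀ q < p, 2 ≤ j (m+q)) →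
    (∀ q, q+1 < p → h (m+q) (j (m+q)) < j (m+q+1)) →
    ∀ t : ℝ, t ∈ Set.Ioc 0 (1/(h (m+p-1) (j (m+p-1)) : ℝ)) →
    Mfun a b j m p t ∈ Set.Ioc (1/(j m : ℝ)) (1/((j m : ℝ) - 1)) := by
  intro p
  induction p with
  | zero => omega
  | succ p ih =>
    intro _ m hj2 hadm t ht
    by_cases hp : p = 0
    · subst hp
      -- base case : Mfun m 1 t = 1/j m + r * t
      have hjm : 2 ≤ j m := by have := hj2 0 (by omega); simpa using this
      have hA : 0 < a m (j m) := ha _ _ hjm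
      have hB : 0 < b m (j m) := hb _ _ hjm
      have hH : 0 < h m (j m) := hpos _ _ hjm
      have habR : ((b m (j m) : ℝ)) * (h m (j m) : ℝ)
          = (a m (j m) : ℝ) * (j m : ℝ) * ((j m : ℝ) - 1) := by
        have := hab m (j m) hjm
        have hc : ((j m - 1 : ℕ) : ℝ) = (j m : ℝ) - 1 := by
          have : 1 ≤ j m := by omega
          push_cast [this]; ring
        rw [← hc]
        exact_mod_cast congrArg (Nat.cast : ℕ → ℝ) this
      have ht' : t ∈ Set.Ioc 0 (1/(h m (j m) : ℝ)) := by simpa using ht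
      have := step_mem_real (by exact_mod_cast hA) (by exact_mod_cast hB)
        (by exact_mod_cast hH) (by exact_mod_cast hjm) habR ht'.1 ht'.2
      simp only [Mfun]
      exact ⟨this.1, this.2⟩
    · -- inductive step
      have hp1 : 1 ≤ p := by omega
      have hjm : 2 ≤ j m := by have := hj2 0 (by omega); simpa using this
      have hu : Mfun a b j (m+1) p t ∈ Set.Ioc (1/(j (m+1) : ℝ)) (1/((j (m+1) : ℝ) - 1)) := by
        apply ih hp1 (m+1)
        · intro q hq
          have := hj2 (q+1) (by omega)
          rwa [show m + (q+1) = m+1+q by omega] at this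
        · intro q hq
          have := hadm (q+1) (by omega)
          rwa [show m + (q+1) = m+1+q by omega] at this
        · rwa [show m + 1 + p - 1 = m + (p+1) - 1 by omega]
      -- j (m+1) > h m (j m)
      have hadm0 : h m (j m) < j (m+1) := by
        have := hadm 0 (by omega)
        simpa using this
      have hjm1 : 2 ≤ j (m+1) := by have := hj2 1 (by omega); simpa using this
      have hA : 0 < a m (j m) := ha _ _ hjm
      have hB : 0 < b m (j m) := hb _ _ hjm
      have hH : 0 < h m (j m) := hpos _ _ hjm
      have habR : ((b m (j m) : ℝ)) * (h m (j m) : ℝ)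
          = (a m (j m) : ℝ) * (j m : ℝ) * ((j m : ℝ) - 1) := by
        have := hab m (j m) hjm
        have hc : ((j m - 1 : ℕ) : ℝ) = (j m : ℝ) - 1 := by
          have : 1 ≤ j m := by omega
          push_cast [this]; ring
        rw [← hc]
        exact_mod_cast congrArg (Nat.cast : ℕ → ℝ) this
      have hsub : Mfun a b j (m+1) p t ∈ Set.Ioc (0:ℝ) (1/(h m (j m) : ℝ)) := by
        constructor
        · have : (0:ℝ) < 1/(j (m+1) : ℝ) := by positivity
          linarith [hu.1]
        · have h1 : (h m (j m) : ℝ) ≤ (j (m+1) : ℝ) - 1 := by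
            have : h m (j m) ≤ j (m+1) - 1 := by omega
            have hc : ((j (m+1) - 1 : ℕ) : ℝ) = (j (m+1) : ℝ) - 1 := by
              have : 1 ≤ j (m+1) := by omega
              push_cast [this]; ring
            calc (h m (j m) : ℝ) ≤ ((j (m+1) - 1 : ℕ) : ℝ) := by exact_mod_cast this
              _ = (j (m+1) : ℝ) - 1 := hc
          have hH' : (0:ℝ) < (h m (j m) : ℝ) := by exact_mod_cast hH
          have : 1/((j (m+1) : ℝ) - 1) ≤ 1/(h m (j m) : ℝ) :=
            one_div_le_one_div_of_le hH' h1
          linarith [hu.2]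
      have := step_mem_real (by exact_mod_cast hA) (by exact_mod_cast hB)
        (by exact_mod_cast hH) (by exact_mod_cast hjm) habR hsub.1 hsub.2
      simp only [Mfun]
      exact ⟨this.1, this.2⟩

lemma X_step_inv {a b : ℕ → ℕ → ℕ} {x : ℝ} (hx : InfiniteROE a b x)
    (ha : ∀ k j, 2 ≤ j → 0 < a k j) (hb : ∀ k j, 2 ≤ j → 0 < b k j) (m : ℕ) :
    1/(D a b x m : ℝ) + ((a m (D a b x m) : ℝ)/(b m (D a b x m) : ℝ)) * X a b x (m+1)
      = X a b x m := by
  have h2 : 2 ≤ D a b x m := Dge2 hx m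
  have hA : (0:ℝ) < (a m (D a b x m) : ℝ) := by exact_mod_cast ha _ _ h2
  have hB : (0:ℝ) < (b m (D a b x m) : ℝ) := by exact_mod_cast hb _ _ h2
  have hD : (0:ℝ) < (D a b x m : ℝ) := by positivity
  rw [X_succ]
  field_simp
  ring

lemma X_recover {a b : ℕ → ℕ → ℕ} {x : ℝ} (hx : InfiniteROE a b x)
    (ha : ∀ k j, 2 ≤ j → 0 < a k j) (hb : ∀ k j, 2 ≤ j → 0 < b k j) :
    ∀ p m, Mfun a b (D a b x) m p (X a b x (m+p)) = X a b x m := by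
  intro p
  induction p with
  | zero => intro m; rfl
  | succ p ih =>
    intro m
    simp only [Mfun]
    rw [show m + (p+1) = (m+1) + p by omega, ih (m+1)]
    exact X_step_inv hx ha hb m

lemma digit_growth {a b h : ℕ → ℕ → ℕ} {x : ℝ} (hx : InfiniteROE a b x)
    (ha : ∀ k j, 2 ≤ j → 0 < a k j) (hb : ∀ k j, 2 ≤ j → 0 < b k j)
    (hpos : ∀ k j, 2 ≤ j → 0 < h k j)
    (hab : ∀ k j, 2 ≤ j → b k j * h k j = a k j * j * (j - 1)) (m : ℕ) :
    h m (D a b x m) < D a b x (m+1) := by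
  set d := D a b x m with hd
  have h2 : 2 ≤ d := Dge2 hx m
  have hA : (0:ℝ) < (a m d : ℝ) := by exact_mod_cast ha _ _ h2
  have hB : (0:ℝ) < (b m d : ℝ) := by exact_mod_cast hb _ _ h2
  have hH : (0:ℝ) < (h m d : ℝ) := by exact_mod_cast hpos _ _ h2
  have hdR : (2:ℝ) ≤ (d : ℝ) := by exact_mod_cast h2
  have habR : ((b m d : ℝ)) * (h m d : ℝ) = (a m d : ℝ) * (d : ℝ) * ((d : ℝ) - 1) := by
    have := hab m d h2
    have hc : ((d - 1 : ℕ) : ℝ) = (d : ℝ) - 1 := by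
      have : 1 ≤ d := by omega
      push_cast [this]; ring
    rw [← hc]
    exact_mod_cast congrArg (Nat.cast : ℕ → ℝ) this
  -- X (m+1) ≤ 1 / h m d
  have hup : X a b x (m+1) ≤ 1/(h m d : ℝ) := by
    have hXle : X a b x m ≤ 1/((d:ℝ) - 1) := (X_mem_Ioc hx m).2
    rw [X_succ, ← hd]
    have key : ((b m d : ℝ)/(a m d : ℝ)) * (1/((d:ℝ)-1) - 1/(d:ℝ)) = 1/(h m d : ℝ) := by
      have hd1 : (0:ℝ) < (d:ℝ) - 1 := by linarith
      field_simp
      nlinarith [habR]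
    rw [← key]
    apply mul_le_mul_of_nonneg_left _ (le_of_lt (div_pos hB hA))
    linarith
  have hX1 : 0 < X a b x (m+1) := (hx (m+1)).1
  have hfl : (h m d : ℤ) ≤ ⌊1 / X a b x (m+1)⌋ := by
    apply Int.le_floor.mpr
    push_cast
    rw [le_div_iff₀ hX1]
    calc (h m d : ℝ) * X a b x (m+1) ≤ (h m d : ℝ) * (1/(h m d : ℝ)) :=
          mul_le_mul_of_nonneg_left hup (le_of_lt hH)
      _ = 1 := by field_simp
  have : h m d ≤ (⌊1 / X a b x (m+1)⌋).toNat := by omega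
  simp only [D]
  omega

lemma Mfun_volume (a b : ℕ → ℕ → ℕ) (j : ℕ → ℕ) (m p : ℕ) (u v : ℝ)
    (hs : 0 < slope a b j m p) :
    volume (Mfun a b j m p '' Set.Ioc u v) = ENNReal.ofReal (slope a b j m p * (v - u)) := by
  rw [Mfun_image a b j m p u v hs, Real.volume_Ioc, Mfun_affine a b j m p v,
    Mfun_affine a b j m p u]
  congr 1
  ring

lemma Ioc_inv_disjoint {J J' : ℕ} (h2 : 2 ≤ J) (hlt : J < J') {u : ℝ}
    (hu : u ∈ Set.Ioc (1/(J:ℝ)) (1/((J:ℝ)-1)))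
    (hu' : u ∈ Set.Ioc (1/(J':ℝ)) (1/((J':ℝ)-1))) : False := by
  have h1 : (J:ℝ) ≤ (J':ℝ) - 1 := by
    have : J + 1 ≤ J' := hlt
    have := (Nat.cast_le (α := ℝ)).mpr this
    push_cast at this
    linarith
  have hJ0 : (0:ℝ) < (J:ℝ) := by
    have : 0 < J := by omega
    exact_mod_cast this
  have h3 : 1/((J':ℝ)-1) ≤ 1/(J:ℝ) := one_div_le_one_div_of_le hJ0 h1
  linarith [hu.1, hu'.2]

lemma one_div_h_eq {a b h : ℕ → ℕ → ℕ} (ha : ∀ k j, 2 ≤ j → 0 < a k j)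
    (hb : ∀ k j, 2 ≤ j → 0 < b k j) (hpos : ∀ k j, 2 ≤ j → 0 < h k j)
    (hab : ∀ k j, 2 ≤ j → b k j * h k j = a k j * j * (j - 1))
    {m d : ℕ} (h2 : 2 ≤ d) :
    (b m d : ℝ) / ((a m d : ℝ) * (d : ℝ) * ((d : ℝ) - 1)) = 1/(h m d : ℝ) := by
  have hA : (0:ℝ) < (a m d : ℝ) := by exact_mod_cast ha _ _ h2
  have hB : (0:ℝ) < (b m d : ℝ) := by exact_mod_cast hb _ _ h2
  have hH : (0:ℝ) < (h m d : ℝ) := by exact_mod_cast hpos _ _ h2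
  have hd2 : (2:ℝ) ≤ (d:ℝ) := by exact_mod_cast h2
  have habR : ((b m d : ℝ)) * (h m d : ℝ) = (a m d : ℝ) * (d : ℝ) * ((d : ℝ) - 1) := by
    have := hab m d h2
    have hc : ((d - 1 : ℕ) : ℝ) = (d : ℝ) - 1 := by
      have : 1 ≤ d := by omega
      push_cast [this]; ring
    rw [← hc]
    exact_mod_cast congrArg (Nat.cast : ℕ → ℝ) this
  rw [div_eq_div_iff (by nlinarith : ((a m d : ℝ) * (d : ℝ) * ((d : ℝ) - 1)) ≠ 0) (ne_of_gt hH)]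
  linarith

lemma Bset_bound (a b h : ℕ → ℕ → ℕ)
    (ha : ∀ k j, 2 ≤ j → 0 < a k j) (hb : ∀ k j, 2 ≤ j → 0 < b k j)
    (hpos : ∀ k j, 2 ≤ j → 0 < h k j)
    (hab : ∀ k j, 2 ≤ j → b k j * h k j = a k j * j * (j - 1))
    (l : ℕ → ℝ)
    (hH : ∀ x : ℝ, InfiniteROE a b x → ∀ m : ℕ,
      (b m (D a b x m) : ℝ) /
          ((a m (D a b x m) : ℝ) * (D a b x m : ℝ) * ((D a b x m : ℝ) - 1)) < l (m + 2))
    (i k : ℕ) (hi : 1 ≤ i) :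
    volume {x : ℝ | x ∈ Set.Ioo (0:ℝ) 1 ∧ InfiniteROE a b x ∧ alpha a b h x (k+1) = i}
      ≤ ENNReal.ofReal (l (k+2)) := by
  classical
  set B := {x : ℝ | x ∈ Set.Ioo (0:ℝ) 1 ∧ InfiniteROE a b x ∧ alpha a b h x (k+1) = i}
    with hB
  set ext : (Fin (k+1) → ℕ) → ℕ → ℕ :=
    fun v m => if hm : m < k+1 then v ⟨m, hm⟩ else 2 with hext
  set S : Set (Fin (k+1) → ℕ) := (fun x (q : Fin (k+1)) => D a b x q) '' B with hS
  set piece : (Fin (k+1) → ℕ) → Set ℝ := fun v =>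
    Mfun a b (ext v) 0 (k+1) ''
      Set.Ioc (1/((h k (ext v k) + i : ℕ) : ℝ)) (1/(((h k (ext v k) + i : ℕ) : ℝ) - 1))
    with hpiece
  set T : (Fin (k+1) → ℕ) → Set ℝ := fun v =>
    Mfun a b (ext v) 0 (k+1) '' Set.Ioc 0 (1/((h k (ext v k) : ℕ) : ℝ)) with hT
  -- facts for v ∈ S
  have hfacts : ∀ v ∈ S, (∀ q < k+1, 2 ≤ ext v q) ∧
      (∀ q, q+1 < k+1 → h q (ext v q) < ext v (q+1)) ∧
      1/((h k (ext v k) : ℕ) : ℝ) < l (k+2) ∧ 0 < h k (ext v k) := by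
    rintro v ⟨x, hxB, rfl⟩
    obtain ⟨hxI, hxInf, hxa⟩ := hxB
    have hde : ∀ q < k+1, ext (fun q : Fin (k+1) => D a b x q) q = D a b x q := by
      intro q hq
      simp only [hext, dif_pos hq]
    have h2 : ∀ q < k+1, 2 ≤ ext (fun q : Fin (k+1) => D a b x q) q := by
      intro q hq
      rw [hde q hq]
      exact Dge2 hxInf q
    refine ⟨h2, ?_, ?_, ?_⟩
    · intro q hq
      rw [hde q (by omega), hde (q+1) hq]
      exact digit_growth hxInf ha hb hpos hab q
    · rw [hde k (by omega)]
      have := hH x hxInf k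
      rwa [one_div_h_eq ha hb hpos hab (Dge2 hxInf k)] at this
    · rw [hde k (by omega)]
      exact hpos _ _ (Dge2 hxInf k)
  -- covering
  have hcover : B ⊆ ⋃ v ∈ S, piece v := by
    intro x hx
    obtain ⟨hxI, hxInf, hxa⟩ := hx
    set v : Fin (k+1) → ℕ := fun q => D a b x q with hv
    have hvS : v ∈ S := ⟨x, ⟨hxI, hxInf, hxa⟩, rfl⟩
    refine Set.mem_biUnion hvS ?_
    have hde : ∀ q < k+1, ext v q = D a b x q := by
      intro q hq
      simp only [hext, hv, dif_pos hq]
    -- D x (k+1) = h k (D x k) + i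
    have hgrow := digit_growth hxInf ha hb hpos hab k
    have hDeq : D a b x (k+1) = h k (ext v k) + i := by
      rw [hde k (by omega)]
      have : alpha a b h x (k+1) = D a b x (k+1) - h k (D a b x k) := rfl
      omega
    have hmem := X_mem_Ioc hxInf (k+1)
    have hrec : Mfun a b (D a b x) 0 (k+1) (X a b x (k+1)) = x := by
      have := X_recover hxInf ha hb (k+1) 0
      rw [show (0:ℕ) + (k+1) = k+1 by omega] at this
      exact this
    have hcong : Mfun a b (ext v) 0 (k+1) (X a b x (k+1))
        = Mfun a b (D a b x) 0 (k+1) (X a b x (k+1)) := by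
      apply Mfun_congr
      intro q hq
      simpa using hde q hq
    refine ⟨X a b x (k+1), ?_, by rw [hcong, hrec]⟩
    rw [← hDeq]
    exact ⟨hmem.1, hmem.2⟩
  -- countability
  have hScount : S.Countable := Set.to_countable S
  -- per-v bound
  have hper : ∀ v ∈ S, volume (piece v) ≤ ENNReal.ofReal (l (k+2)) * volume (T v) := by
    intro v hv
    obtain ⟨hj2, hadm, hl, hHpos⟩ := hfacts v hv
    have hs : 0 < slope a b (ext v) 0 (k+1) := by
      apply slope_pos ha hb
      intro q hq
      simpa using hj2 q hq
    set Hn := h k (ext v k) with hHn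
    have hHr : (1:ℝ) ≤ (Hn : ℝ) := by exact_mod_cast hHpos
    have hir : (1:ℝ) ≤ (i : ℝ) := by exact_mod_cast hi
    have hcast1 : ((Hn + i : ℕ) : ℝ) = (Hn : ℝ) + (i : ℝ) := by push_cast; ring
    rw [hpiece, hT]
    rw [Mfun_volume a b (ext v) 0 (k+1) _ _ hs, Mfun_volume a b (ext v) 0 (k+1) _ _ hs]
    have hl0 : 0 ≤ l (k+2) := le_trans (by positivity) (le_of_lt hl)
    rw [← ENNReal.ofReal_mul hl0]
    apply ENNReal.ofReal_le_ofReal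
    have hkey : 1/(((Hn + i : ℕ) : ℝ) - 1) - 1/((Hn + i : ℕ) : ℝ)
        ≤ l (k+2) * (1/(Hn : ℝ) - 0) := by
      rw [hcast1]
      have d1 : (0:ℝ) < (Hn:ℝ) + (i:ℝ) - 1 := by linarith
      have d2 : (0:ℝ) < (Hn:ℝ) + (i:ℝ) := by linarith
      have e1 : 1/((Hn:ℝ) + (i:ℝ) - 1) - 1/((Hn:ℝ) + (i:ℝ))
          = 1/(((Hn:ℝ) + (i:ℝ) - 1) * ((Hn:ℝ) + (i:ℝ))) := by
        rw [div_sub_div _ _ (ne_of_gt d1) (ne_of_gt d2)]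
        congr 1
        ring
      rw [e1]
      have e2 : 1/(((Hn:ℝ) + (i:ℝ) - 1) * ((Hn:ℝ) + (i:ℝ))) ≤ 1/((Hn:ℝ) * (Hn:ℝ)) := by
        apply one_div_le_one_div_of_le (by nlinarith)
        nlinarith
      have e3 : 1/((Hn:ℝ) * (Hn:ℝ)) ≤ l (k+2) * (1/(Hn:ℝ) - 0) := by
        have hHr0 : (0:ℝ) < (Hn:ℝ) := by linarith
        rw [sub_zero]
        rw [div_le_iff₀ (by positivity)]
        have h5 : 1/(Hn:ℝ) < l (k+2) := hl
        rw [div_lt_iff₀ hHr0] at h5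
        have hid : l (k+2) * (1/(Hn:ℝ)) * ((Hn:ℝ) * (Hn:ℝ)) = l (k+2) * (Hn:ℝ) := by
          field_simp
        rw [hid]
        exact le_of_lt h5
      linarith [e2, e3]
    calc slope a b (ext v) 0 (k+1) * (1/(((Hn + i : ℕ) : ℝ) - 1) - 1/((Hn + i : ℕ) : ℝ))
        ≤ slope a b (ext v) 0 (k+1) * (l (k+2) * (1/(Hn : ℝ) - 0)) :=
          mul_le_mul_of_nonneg_left hkey (le_of_lt hs)
      _ = l (k+2) * (slope a b (ext v) 0 (k+1) * (1/(Hn : ℝ) - 0)) := by ring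
  -- T v is an interval, measurable
  have hTmeas : ∀ v ∈ S, MeasurableSet (T v) := by
    intro v hv
    obtain ⟨hj2, _, _, _⟩ := hfacts v hv
    have hs : 0 < slope a b (ext v) 0 (k+1) := by
      apply slope_pos ha hb
      intro q hq
      simpa using hj2 q hq
    rw [hT]
    simp only
    rw [Mfun_image a b (ext v) 0 (k+1) _ _ hs]
    exact measurableSet_Ioc
  -- pairwise disjoint
  have hTdisj : S.PairwiseDisjoint T := by
    intro v hv v' hv' hne
    obtain ⟨hj2, hadm, _, hHp⟩ := hfacts v hv
    obtain ⟨hj2', hadm', _, hHp'⟩ := hfacts v' hv'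
    rw [Function.onFun, Set.disjoint_left]
    rintro y ⟨t, ht, hyt⟩ ⟨t', ht', hyt'⟩
    -- minimal differing index
    have hPex : ∃ q, ext v q ≠ ext v' q := by
      obtain ⟨q0, hq0⟩ := Function.ne_iff.mp hne
      exact ⟨q0, by simp only [hext, dif_pos q0.isLt, Fin.eta]; exact hq0⟩
    set m := Nat.find hPex with hm
    have hmne : ext v m ≠ ext v' m := Nat.find_spec hPex
    have hmin : ∀ q < m, ext v q = ext v' q := by
      intro q hq
      have := Nat.find_min hPex hq
      tauto
    have hmk : m < k+1 := by
      by_contra hc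
      apply hmne
      simp only [hext, dif_neg (by omega : ¬ m < k+1)]
    -- decompose
    have hdec : ∀ (w : Fin (k+1) → ℕ) (s : ℝ), Mfun a b (ext w) 0 (k+1) s
        = Mfun a b (ext w) 0 m (Mfun a b (ext w) m (k+1-m) s) := by
      intro w s
      rw [show k+1 = m + (k+1-m) by omega, Mfun_comp]
      simp
    have hinner : Mfun a b (ext v) m (k+1-m) t
        ∈ Set.Ioc (1/(ext v m : ℝ)) (1/((ext v m : ℝ) - 1)) := by
      apply nest ha hb hpos hab (ext v) (k+1-m) (by omega) m
      · intro q hq; exact hj2 (m+q) (by omega)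
      · intro q hq; exact hadm (m+q) (by omega)
      · rwa [show m + (k+1-m) - 1 = k by omega]
    have hinner' : Mfun a b (ext v') m (k+1-m) t'
        ∈ Set.Ioc (1/(ext v' m : ℝ)) (1/((ext v' m : ℝ) - 1)) := by
      apply nest ha hb hpos hab (ext v') (k+1-m) (by omega) m
      · intro q hq; exact hj2' (m+q) (by omega)
      · intro q hq; exact hadm' (m+q) (by omega)
      · rwa [show m + (k+1-m) - 1 = k by omega]
    -- injectivity of outer map
    have hs0 : 0 < slope a b (ext v) 0 m := by
      apply slope_pos ha hb
      intro q hq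
      have := hj2 q (by omega)
      simpa using this
    have hcong0 : Mfun a b (ext v') 0 m (Mfun a b (ext v') m (k+1-m) t')
        = Mfun a b (ext v) 0 m (Mfun a b (ext v') m (k+1-m) t') := by
      apply Mfun_congr
      intro q hq
      have := hmin q (by simpa using hq)
      simpa using this.symm
    have heq : Mfun a b (ext v) m (k+1-m) t = Mfun a b (ext v') m (k+1-m) t' := by
      have h1 : Mfun a b (ext v) 0 m (Mfun a b (ext v) m (k+1-m) t)
          = Mfun a b (ext v) 0 m (Mfun a b (ext v') m (k+1-m) t') := by
        rw [← hcong0, ← hdec, ← hdec, hyt, hyt']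
      rw [Mfun_affine a b (ext v) 0 m (Mfun a b (ext v) m (k+1-m) t),
        Mfun_affine a b (ext v) 0 m (Mfun a b (ext v') m (k+1-m) t')] at h1
      have := mul_left_cancel₀ (ne_of_gt hs0) (by linarith : slope a b (ext v) 0 m *
        Mfun a b (ext v) m (k+1-m) t = slope a b (ext v) 0 m *
        Mfun a b (ext v') m (k+1-m) t')
      exact this
    rw [heq] at hinner
    rcases lt_or_gt_of_ne hmne with hlt | hlt
    · exact Ioc_inv_disjoint (hj2 m hmk) hlt hinner hinner'
    · exact Ioc_inv_disjoint (hj2' m hmk) hlt hinner' hinner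
  -- union of T's inside Ioc 0 1
  have hTsub : ∀ v ∈ S, T v ⊆ Set.Ioc (0:ℝ) 1 := by
    intro v hv
    obtain ⟨hj2, hadm, _, _⟩ := hfacts v hv
    rintro y ⟨t, ht, rfl⟩
    have hmem : Mfun a b (ext v) 0 (k+1) t
        ∈ Set.Ioc (1/(ext v 0 : ℝ)) (1/((ext v 0 : ℝ) - 1)) := by
      apply nest ha hb hpos hab (ext v) (k+1) (by omega) 0
      · intro q hq; simpa using hj2 q hq
      · intro q hq; simpa using hadm q hq
      · rwa [show 0 + (k+1) - 1 = k by omega]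
    have h20 : 2 ≤ ext v 0 := hj2 0 (by omega)
    have h2R : (2:ℝ) ≤ (ext v 0 : ℝ) := by exact_mod_cast h20
    constructor
    · have : (0:ℝ) < 1/(ext v 0 : ℝ) := by positivity
      linarith [hmem.1]
    · have : 1/((ext v 0 : ℝ) - 1) ≤ 1 := by
        rw [div_le_one (by linarith)]
        linarith
      linarith [hmem.2]
  -- assemble
  calc volume B ≤ volume (⋃ v ∈ S, piece v) := measure_mono hcover
    _ ≤ ∑' (v : ↑S), volume (piece ↑v) := measure_biUnion_le volume hScount piece
    _ ≤ ∑' (v : ↑S), ENNReal.ofReal (l (k+2)) * volume (T ↑v) :=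
        ENNReal.tsum_le_tsum (fun v => hper ↑v v.2)
    _ = ENNReal.ofReal (l (k+2)) * ∑' (v : ↑S), volume (T ↑v) := ENNReal.tsum_mul_left
    _ = ENNReal.ofReal (l (k+2)) * volume (⋃ v ∈ S, T v) := by
        rw [measure_biUnion hScount hTdisj hTmeas]
    _ ≤ ENNReal.ofReal (l (k+2)) * volume (Set.Ioc (0:ℝ) 1) := by
        apply mul_le_mul_right
        apply measure_mono
        exact Set.iUnion₂_subset hTsub
    _ = ENNReal.ofReal (l (k+2)) := by
        rw [Real.volume_Ioc]
        norm_num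

/-- Assume Hypothesis (H).  Then for `λ`-almost every `x ∈ (0,1)`, every positive
integer `i` occurs only finitely many times among the difference-ROE digits of `x`; in
particular, for each fixed digit `i₀` the set
`A_{i₀} = {x : α_k(x) = i₀ for infinitely many k}` satisfies `λ(A_{i₀}) = 0`. -/
theorem ae_finitely_many_occurrences (a b h : ℕ → ℕ → ℕ)
    (ha : ∀ k j, 2 ≤ j → 0 < a k j) (hb : ∀ k j, 2 ≤ j → 0 < b k j)
    (hpos : ∀ k j, 2 ≤ j → 0 < h k j)
    (hab : ∀ k j, 2 ≤ j → b k j * h k j = a k j * j * (j - 1))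
    (l : ℕ → ℝ) (hlpos : ∀ k, 2 ≤ k → 0 < l k)
    (hlsum : Summable fun m : ℕ => l (m + 2))
    (hH : ∀ x : ℝ, InfiniteROE a b x → ∀ m : ℕ,
      (b m (D a b x m) : ℝ) /
          ((a m (D a b x m) : ℝ) * (D a b x m : ℝ) * ((D a b x m : ℝ) - 1)) < l (m + 2)) :
    (∀ᵐ x ∂(volume.restrict (Set.Ioo (0 : ℝ) 1)),
      InfiniteROE a b x → ∀ i : ℕ, 1 ≤ i → {k : ℕ | alpha a b h x k = i}.Finite) ∧
    ∀ i₀ : ℕ, 1 ≤ i₀ →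
      volume {x : ℝ | x ∈ Set.Ioo (0 : ℝ) 1 ∧ InfiniteROE a b x ∧
        {k : ℕ | alpha a b h x k = i₀}.Infinite} = 0 := by
  classical
  set Bset : ℕ → ℕ → Set ℝ := fun i k =>
    {x : ℝ | x ∈ Set.Ioo (0:ℝ) 1 ∧ InfiniteROE a b x ∧ alpha a b h x (k+1) = i} with hBset
  have hbound : ∀ i, 1 ≤ i → ∀ k, volume (Bset i k) ≤ ENNReal.ofReal (l (k+2)) :=
    fun i hi k => Bset_bound a b h ha hb hpos hab l hH i k hi
  have hsum : ∀ i, 1 ≤ i → (∑' k, volume (Bset i k)) ≠ ⊤ := by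
    intro i hi
    apply ne_top_of_le_ne_top _ (ENNReal.tsum_le_tsum (hbound i hi))
    rw [← ENNReal.ofReal_tsum_of_nonneg (fun k => le_of_lt (hlpos (k+2) (by omega))) hlsum]
    exact ENNReal.ofReal_ne_top
  have hlim : ∀ i, 1 ≤ i → volume (Filter.atTop.limsup (Bset i)) = 0 := by
    intro i hi
    exact measure_limsup_atTop_eq_zero (hsum i hi)
  set N : Set ℝ := ⋃ i : ℕ, Filter.atTop.limsup (Bset (i+1)) with hN
  have hN0 : volume N = 0 := measure_iUnion_null (fun i => hlim (i+1) (by omega))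
  have hmem : ∀ x : ℝ, x ∈ Set.Ioo (0:ℝ) 1 → InfiniteROE a b x →
      ∀ i, 1 ≤ i → {k : ℕ | alpha a b h x k = i}.Infinite →
      x ∈ Filter.atTop.limsup (Bset i) := by
    intro x hxI hxInf i hi hinf
    rw [Filter.mem_limsup_iff_frequently_mem]
    have h2 : {k : ℕ | alpha a b h x (k+1) = i}.Infinite := by
      intro hfin
      have hsubset : {k : ℕ | alpha a b h x k = i}
          ⊆ insert 0 ((fun k => k+1) '' {k : ℕ | alpha a b h x (k+1) = i}) := by
        intro k hk
        rcases Nat.eq_zero_or_pos k with rfl | hk0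
        · exact Set.mem_insert _ _
        · refine Set.mem_insert_of_mem _ ⟨k-1, ?_, show k-1+1 = k by omega⟩
          show alpha a b h x (k-1+1) = i
          rw [show k-1+1 = k by omega]
          exact hk
      exact hinf (((hfin.image _).insert 0).subset hsubset)
    have hset : ∀ k : ℕ, x ∈ Bset i k ↔ alpha a b h x (k+1) = i := by
      intro k
      simp only [hBset, Set.mem_setOf_eq]
      tauto
    rw [Nat.frequently_atTop_iff_infinite]
    have : {n : ℕ | x ∈ Bset i n} = {k : ℕ | alpha a b h x (k+1) = i} := by
      ext k; exact hset k
    rwa [this]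
  constructor
  · have hres : (volume.restrict (Set.Ioo (0:ℝ) 1)) N = 0 :=
      le_antisymm (le_trans (Measure.restrict_apply_le _ _) (le_of_eq hN0)) zero_le
    have hae1 : ∀ᵐ x ∂(volume.restrict (Set.Ioo (0:ℝ) 1)), x ∉ N :=
      measure_eq_zero_iff_ae_notMem.mp hres
    have hae2 : ∀ᵐ x ∂(volume.restrict (Set.Ioo (0:ℝ) 1)), x ∈ Set.Ioo (0:ℝ) 1 :=
      ae_restrict_mem measurableSet_Ioo
    filter_upwards [hae1, hae2] with x hxN hxI
    intro hxInf i hi1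
    by_contra hcon
    apply hxN
    refine Set.mem_iUnion.mpr ⟨i-1, ?_⟩
    rw [show i-1+1 = i by omega]
    exact hmem x hxI hxInf i hi1 hcon
  · intro i₀ hi₀
    apply le_antisymm _ zero_le
    calc volume {x : ℝ | x ∈ Set.Ioo (0 : ℝ) 1 ∧ InfiniteROE a b x ∧
          {k : ℕ | alpha a b h x k = i₀}.Infinite}
        ≤ volume (Filter.atTop.limsup (Bset i₀)) :=
          measure_mono (fun x hx => hmem x hx.1 hx.2.1 i₀ hi₀ hx.2.2)
      _ = 0 := hlim i₀ hi₀


end ROE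
end
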